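/- arXiv:2307.05160 — 4 statements merged into one kernel-verified Lean document; each statement's English description precedes it below -/
import Mathlib

section
/- Let a > −1 and ε ≥ 0 be real and L ≥ 2 an integer. Then: (i) for every k ∈ ℕ, the rational function g_k(·; a, ε, L) belongs to F(ε,L); moreover for k ≥ 1 its singularities are simple poles contained in {±A_1,…,±A_k} and its residue at ±A_k is nonzero; (ii) every φ ∈ F(ε,L) can be written in a unique way as a finite linear combination φ = Σ_{k≥0} c_k·g_k(·; a, ε, L) with complex coefficients c_k, only finitely many nonzero; that is, the family {g_k(·; a, ε, L) : k ∈ ℕ} is a basis of the complex vector space F(ε,L). -/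
open Finset

/-- Pochhammer symbol over `ℂ`. -/
noncomputable def pochC (x : ℂ) (n : ℕ) : ℂ := (ascPochhammer ℂ n).eval x

/-- `g_k(t; a, ε, L)`, the terminating ₄F₃-type series. -/
noncomputable def gfun (a eps : ℝ) (L k : ℕ) (t : ℂ) : ℂ :=
  ∑ n ∈ Finset.range (k+1),
    (pochC (-(k:ℂ)) n * pochC ((k:ℂ) + 2*(eps:ℂ)) n * pochC (L:ℂ) n * pochC ((L:ℂ) + (a:ℂ)) n) /
    (pochC (-t + (L:ℂ) + (eps:ℂ)) n * pochC (t + (L:ℂ) + (eps:ℂ)) n * pochC ((a:ℂ)+1) n *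
      (Nat.factorial n : ℂ))

/-- `e_0 ≡ 1` and, for `m ≥ 1`, `e_m(t) = 1/(t−A_m) − 1/(t+A_m)` with `A_m = L+ε+m−1`. -/
noncomputable def efun (eps : ℝ) (L m : ℕ) (t : ℂ) : ℂ :=
  if m = 0 then 1
  else 1/(t - ((L:ℂ) + (eps:ℂ) + (m:ℂ) - 1)) - 1/(t + ((L:ℂ) + (eps:ℂ) + (m:ℂ) - 1))

/-- `t` avoids all the points `±A_m = ±(L+ε+m−1)`, `m ≥ 1`. -/
def Adm (eps : ℝ) (L : ℕ) (t : ℂ) : Prop :=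
  ∀ m : ℕ, t^2 ≠ ((L:ℂ) + (eps:ℂ) + (m:ℂ))^2

/-- Membership in the space `F(ε,L)`: even rational functions regular at `∞` whose only
singularities are simple poles contained in `{±A_m : m ≥ 1}`; such functions are exactly
the finite linear combinations `c₀ + Σ_{m≥1} r_m (1/(t−A_m) − 1/(t+A_m))`
(partial-fraction expansion), where `r_m` is the residue at `A_m`. -/
def InF (eps : ℝ) (L : ℕ) (φ : ℂ → ℂ) : Prop :=
  ∃ r : ℕ → ℂ, (Function.support r).Finite ∧
    ∀ t : ℂ, Adm eps L t → φ t = ∑ᶠ m : ℕ, r m * efun eps L m t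

namespace GB

/-! ### Generalities on the Pochhammer symbol -/

lemma pochC_eq_prod (x : ℂ) (n : ℕ) : pochC x n = ∏ i ∈ range n, (x + i) := by
  induction n with
  | zero => simp [pochC]
  | succ n ih => rw [pochC, ascPochhammer_succ_eval, ← pochC, ih, prod_range_succ]

lemma pochC_ne_zero {x : ℂ} {n : ℕ} (h : ∀ i < n, x + i ≠ 0) : pochC x n ≠ 0 := by
  rw [pochC_eq_prod]
  exact prod_ne_zero_iff.mpr fun i hi => h i (mem_range.mp hi)

lemma pochC_ne_zero_of_pos_re {x : ℂ} (hx : 0 < x.re) (n : ℕ) : pochC x n ≠ 0 := by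
  refine pochC_ne_zero fun i _ hzero => ?_
  have h2 : (x + i).re = 0 := by rw [hzero]; simp
  have h3 : (x + i).re = x.re + i := by simp
  have : (0:ℝ) < x.re + i := by positivity
  simp_all

lemma pochC_neg_nat_ne_zero {k n : ℕ} (h : n ≤ k) : pochC (-(k:ℂ)) n ≠ 0 := by
  refine pochC_ne_zero fun i hi hzero => ?_
  have : (i:ℂ) = (k:ℂ) := by linear_combination hzero
  have : i = k := Nat.cast_injective this
  omega

/-! ### Partial fractions -/

lemma pfrac (b : ℕ → ℂ) (n : ℕ) (hn : n ≠ 0) (hinj : Set.InjOn b (range n)) (s : ℂ)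
    (hs : ∀ j ∈ range n, s ≠ b j) :
    (∏ j ∈ range n, (b j - s))⁻¹ =
      ∑ j ∈ range n, (∏ i ∈ (range n).erase j, (b i - b j))⁻¹ * (b j - s)⁻¹ := by
  have hne : ∀ j ∈ range n, b j - s ≠ 0 := fun j hj => sub_ne_zero.mpr (Ne.symm (hs j hj))
  have hsum : ∑ j ∈ range n, Polynomial.eval s (Lagrange.basis (range n) b j) = 1 := by
    rw [← Polynomial.eval_finset_sum, Lagrange.sum_basis hinj (nonempty_range_iff.mpr hn)]
    simp
  have key : (∑ j ∈ range n, (∏ i ∈ (range n).erase j, (b i - b j))⁻¹ * (b j - s)⁻¹) *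
      (∏ j ∈ range n, (b j - s)) = 1 := by
    rw [sum_mul, ← hsum]
    refine sum_congr rfl fun j hj => ?_
    rw [← Finset.mul_prod_erase _ _ hj]
    have h1 : (b j - s)⁻¹ * ((b j - s) * ∏ i ∈ (range n).erase j, (b i - s))
        = ∏ i ∈ (range n).erase j, (b i - s) := by
      rw [← mul_assoc, inv_mul_cancel₀ (hne j hj), one_mul]
    rw [mul_assoc, h1, ← prod_inv_distrib, ← prod_mul_distrib]
    rw [Lagrange.basis, Polynomial.eval_prod]
    refine prod_congr rfl fun i hi => ?_
    rw [Lagrange.basisDivisor]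
    have : b i - b j = -(b j - b i) := by ring
    rw [this, inv_neg]
    simp only [Polynomial.eval_mul, Polynomial.eval_C, Polynomial.eval_sub, Polynomial.eval_X]
    ring
  exact (eq_inv_of_mul_eq_one_left key).symm

/-! ### The points `A_{j+1} = L + ε + j` and their squares -/

noncomputable def alC (eps : ℝ) (L : ℕ) (j : ℕ) : ℂ := ((L + eps + j : ℝ) : ℂ)
noncomputable def bb (eps : ℝ) (L : ℕ) (j : ℕ) : ℂ := (alC eps L j)^2

lemma alC_eq (eps : ℝ) (L j : ℕ) : alC eps L j = (L:ℂ) + (eps:ℂ) + (j:ℂ) := by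
  simp only [alC, Complex.ofReal_add, Complex.ofReal_natCast]

lemma denom_eq (eps : ℝ) (L : ℕ) (t : ℂ) (n : ℕ) :
    pochC (-t + (L:ℂ) + (eps:ℂ)) n * pochC (t + (L:ℂ) + (eps:ℂ)) n
      = ∏ j ∈ range n, (bb eps L j - t^2) := by
  rw [pochC_eq_prod, pochC_eq_prod, ← prod_mul_distrib]
  refine prod_congr rfl fun j _ => ?_
  rw [bb, alC_eq]; ring

/-! ### The coefficients -/

noncomputable def cB (a eps : ℝ) (L k n : ℕ) : ℂ :=
  (pochC (-(k:ℂ)) n * pochC ((k:ℂ) + 2*(eps:ℂ)) n * pochC (L:ℂ) n * pochC ((L:ℂ) + (a:ℂ)) n) /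
    (pochC ((a:ℂ)+1) n * (Nat.factorial n : ℂ))

noncomputable def wB (eps : ℝ) (L n j : ℕ) : ℂ :=
  (∏ i ∈ (range n).erase j, (bb eps L i - bb eps L j))⁻¹

noncomputable def rk (a eps : ℝ) (L k : ℕ) : ℕ → ℂ := fun m =>
  if m = 0 then 1
  else -(2 * alC eps L (m-1))⁻¹ * ∑ n ∈ Ico (m-1) k, cB a eps L k (n+1) * wB eps L (n+1) (m-1)

lemma cB_zero (a eps : ℝ) (L k : ℕ) : cB a eps L k 0 = 1 := by simp [cB, pochC]

lemma rk_zero (a eps : ℝ) (L k : ℕ) : rk a eps L k 0 = 1 := rfl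

lemma rk_eq_zero_of_gt (a eps : ℝ) (L : ℕ) {k m : ℕ} (h : k < m) : rk a eps L k m = 0 := by
  have hm : m ≠ 0 := by omega
  rw [rk, if_neg hm, Ico_eq_empty (by omega), sum_empty, mul_zero]

lemma gfun_zero_eq (a eps : ℝ) (L : ℕ) (t : ℂ) : gfun a eps L 0 t = 1 := by
  simp [gfun, pochC]

lemma supp_bound {f : ℕ → ℂ} (hf : (Function.support f).Finite) :
    ∃ N : ℕ, ∀ m, N ≤ m → f m = 0 := by
  refine ⟨hf.toFinset.sup id + 1, fun m hm => ?_⟩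
  by_contra h
  have hmem : m ∈ hf.toFinset := hf.mem_toFinset.mpr h
  have := Finset.le_sup (f := id) hmem
  simp only [id] at this
  omega

lemma finsum_mul_eq (c g : ℕ → ℂ) {N : ℕ} (hc : ∀ m, N ≤ m → c m = 0) :
    ∑ᶠ m, c m * g m = ∑ m ∈ range N, c m * g m := by
  refine finsum_eq_finset_sum_of_support_subset _ fun m hm => ?_
  simp only [Function.mem_support] at hm
  simp only [coe_range, Set.mem_Iio]
  by_contra h
  exact hm (by rw [hc m (by omega), zero_mul])

section
variable {eps : ℝ} {L : ℕ} (heps : 0 ≤ eps) (hL : 2 ≤ L)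
include heps hL

lemma al_pos (j : ℕ) : (0:ℝ) < L + eps + j := by
  have : (2:ℝ) ≤ L := by exact_mod_cast hL
  positivity

lemma alC_ne (j : ℕ) : alC eps L j ≠ 0 := by
  simp only [alC, ne_eq, Complex.ofReal_eq_zero]
  exact ne_of_gt (al_pos heps hL j)

lemma bb_inj : Function.Injective (bb eps L) := by
  intro i j h
  simp only [bb, alC] at h
  rw [← Complex.ofReal_pow, ← Complex.ofReal_pow] at h
  have h2 : ((L:ℝ) + eps + i)^2 = ((L:ℝ) + eps + j)^2 := by exact_mod_cast h
  have hi := al_pos heps hL i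
  have hj := al_pos heps hL j
  have h3 : (L:ℝ) + eps + i = (L:ℝ) + eps + j := by nlinarith
  have : (i:ℝ) = j := by linarith
  exact_mod_cast this

lemma wB_ne (n j : ℕ) : wB eps L n j ≠ 0 := by
  rw [wB]
  refine inv_ne_zero (prod_ne_zero_iff.mpr fun i hi => sub_ne_zero.mpr fun h => ?_)
  exact (mem_erase.mp hi).1 (bb_inj heps hL h)

omit heps hL in
lemma Adm_ne_bb {t : ℂ} (ht : Adm eps L t) (j : ℕ) : t^2 ≠ bb eps L j := by
  rw [bb, alC_eq]; exact ht j

lemma efun_succ {t : ℂ} (ht : Adm eps L t) (j : ℕ) :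
    (bb eps L j - t^2)⁻¹ = -(2 * alC eps L j)⁻¹ * efun eps L (j+1) t := by
  have h1 : t - alC eps L j ≠ 0 := by
    intro h
    have : t = alC eps L j := by linear_combination h
    exact Adm_ne_bb ht j (by rw [this, bb])
  have h2 : t + alC eps L j ≠ 0 := by
    intro h
    have : t = -alC eps L j := by linear_combination h
    exact Adm_ne_bb ht j (by rw [this, bb]; ring)
  have h3 : bb eps L j - t^2 ≠ 0 := fun h => Adm_ne_bb ht j (by linear_combination -h)
  have h4 : alC eps L j ≠ 0 := alC_ne heps hL j
  have he : efun eps L (j+1) t = 1/(t - alC eps L j) - 1/(t + alC eps L j) := by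
    rw [efun, if_neg (Nat.succ_ne_zero j), alC_eq]
    push_cast
    ring_nf
  rw [bb] at h3
  rw [he, bb]
  field_simp
  ring

/-! ### Expansion of `g_k` in the `e_m` -/

lemma gfun_expand (a : ℝ) (k : ℕ) {t : ℂ} (ht : Adm eps L t) :
    gfun a eps L k t = ∑ m ∈ range (k+1), rk a eps L k m * efun eps L m t := by
  have hterm : ∀ n, (pochC (-(k:ℂ)) n * pochC ((k:ℂ) + 2*(eps:ℂ)) n * pochC (L:ℂ) n *
        pochC ((L:ℂ) + (a:ℂ)) n) /
      (pochC (-t + (L:ℂ) + (eps:ℂ)) n * pochC (t + (L:ℂ) + (eps:ℂ)) n * pochC ((a:ℂ)+1) n *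
        (Nat.factorial n : ℂ))
      = cB a eps L k n * (∏ j ∈ range n, (bb eps L j - t^2))⁻¹ := by
    intro n
    rw [← denom_eq, cB]
    rw [div_eq_mul_inv, div_eq_mul_inv]
    rw [show pochC (-t + (L:ℂ) + (eps:ℂ)) n * pochC (t + (L:ℂ) + (eps:ℂ)) n *
        pochC ((a:ℂ)+1) n * (Nat.factorial n : ℂ)
      = (pochC ((a:ℂ)+1) n * (Nat.factorial n : ℂ)) *
        (pochC (-t + (L:ℂ) + (eps:ℂ)) n * pochC (t + (L:ℂ) + (eps:ℂ)) n) by ring]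
    rw [mul_inv]
    ring
  have hpf : ∀ n, (∏ j ∈ range (n+1), (bb eps L j - t^2))⁻¹
      = ∑ j ∈ range (n+1), wB eps L (n+1) j * (bb eps L j - t^2)⁻¹ := by
    intro n
    exact pfrac (bb eps L) (n+1) (Nat.succ_ne_zero n) ((bb_inj heps hL).injOn)
      (t^2) (fun j _ => Adm_ne_bb ht j)
  calc gfun a eps L k t
      = ∑ n ∈ range (k+1), cB a eps L k n * (∏ j ∈ range n, (bb eps L j - t^2))⁻¹ := by
        rw [gfun]; exact sum_congr rfl fun n _ => hterm n
    _ = (∑ n ∈ range k, cB a eps L k (n+1) * (∏ j ∈ range (n+1), (bb eps L j - t^2))⁻¹)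
        + cB a eps L k 0 * (∏ j ∈ range 0, (bb eps L j - t^2))⁻¹ := sum_range_succ' _ k
    _ = 1 + ∑ n ∈ range k, ∑ j ∈ range (n+1),
          cB a eps L k (n+1) * wB eps L (n+1) j * (bb eps L j - t^2)⁻¹ := by
        rw [cB_zero]
        simp only [range_zero, prod_empty, inv_one, mul_one]
        rw [add_comm]
        congr 1
        refine sum_congr rfl fun n _ => ?_
        rw [hpf n, mul_sum]
        exact sum_congr rfl fun j _ => by ring
    _ = 1 + ∑ j ∈ range k, ∑ n ∈ Ico j k,
          cB a eps L k (n+1) * wB eps L (n+1) j * (bb eps L j - t^2)⁻¹ := by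
        refine congrArg (1 + ·) ?_
        refine sum_comm' fun n j => ?_
        simp only [mem_range, mem_Ico]
        omega
    _ = 1 + ∑ j ∈ range k, rk a eps L k (j+1) * efun eps L (j+1) t := by
        congr 1
        refine sum_congr rfl fun j _ => ?_
        rw [rk, if_neg (Nat.succ_ne_zero j), Nat.add_sub_cancel, ← sum_mul,
          efun_succ heps hL ht j]
        ring
    _ = ∑ m ∈ range (k+1), rk a eps L k m * efun eps L m t := by
        rw [sum_range_succ' (fun m => rk a eps L k m * efun eps L m t) k]
        rw [rk_zero, efun, if_pos rfl, mul_one, add_comm]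

/-! ### Nonvanishing of the top residue -/

lemma cB_ne_zero (a : ℝ) (ha : -1 < a) {k n : ℕ} (hn : n ≤ k) : cB a eps L k n ≠ 0 := by
  have h2 : (2:ℝ) ≤ L := by exact_mod_cast hL
  have f1 : pochC (-(k:ℂ)) n ≠ 0 := pochC_neg_nat_ne_zero hn
  have f2 : pochC ((k:ℂ) + 2*(eps:ℂ)) n ≠ 0 := by
    refine pochC_ne_zero fun i hi h0 => ?_
    rw [show (k:ℂ) + 2*(eps:ℂ) + (i:ℂ) = ((k + 2*eps + i : ℝ) : ℂ) by push_cast; ring,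
      Complex.ofReal_eq_zero] at h0
    have hik : (i:ℝ) < k := by exact_mod_cast lt_of_lt_of_le hi hn
    have hi0 : (0:ℝ) ≤ i := Nat.cast_nonneg i
    linarith
  have f3 : pochC (L:ℂ) n ≠ 0 := by
    refine pochC_ne_zero_of_pos_re ?_ n
    simp only [Complex.natCast_re]
    linarith
  have f4 : pochC ((L:ℂ) + (a:ℂ)) n ≠ 0 := by
    refine pochC_ne_zero_of_pos_re ?_ n
    simp only [Complex.add_re, Complex.natCast_re, Complex.ofReal_re]
    linarith
  have f5 : pochC ((a:ℂ)+1) n ≠ 0 := by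
    refine pochC_ne_zero_of_pos_re ?_ n
    simp only [Complex.add_re, Complex.ofReal_re, Complex.one_re]
    linarith
  exact div_ne_zero (mul_ne_zero (mul_ne_zero (mul_ne_zero f1 f2) f3) f4)
    (mul_ne_zero f5 (Nat.cast_ne_zero.mpr (Nat.factorial_ne_zero n)))

lemma rk_diag_ne (a : ℝ) (ha : -1 < a) {k : ℕ} (hk : 1 ≤ k) : rk a eps L k k ≠ 0 := by
  have hk0 : k ≠ 0 := by omega
  rw [rk, if_neg hk0]
  have h1 : Ico (k-1) k = {k-1} := by
    rw [show k = (k-1) + 1 by omega]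
    simp [Nat.Ico_succ_singleton]
  rw [h1, sum_singleton, show k - 1 + 1 = k by omega]
  exact mul_ne_zero (neg_ne_zero.mpr (inv_ne_zero (mul_ne_zero two_ne_zero (alC_ne heps hL _))))
    (mul_ne_zero (cB_ne_zero heps hL a ha le_rfl) (wB_ne heps hL _ _))

/-! ### Linear independence of the `e_m` -/

lemma adm_I_mul (x : ℝ) : Adm eps L ((x:ℂ) * Complex.I) := by
  intro m
  rw [show ((L:ℂ) + (eps:ℂ) + (m:ℂ)) = (((L:ℝ) + eps + m : ℝ) : ℂ) by push_cast; ring]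
  intro h
  rw [mul_pow, Complex.I_sq, ← Complex.ofReal_pow, ← Complex.ofReal_pow] at h
  have h2 : -(x^2) = ((L:ℝ) + eps + m)^2 := by
    have h3 : ((-(x^2) : ℝ) : ℂ) = (((((L:ℝ) + eps + m)^2 : ℝ)) : ℂ) := by
      push_cast at h ⊢
      linear_combination h
    exact_mod_cast h3
  have := al_pos heps hL m
  nlinarith

lemma indep (N : ℕ) (ρ : ℕ → ℂ) (hρ : ∀ m, N < m → ρ m = 0)
    (h : ∀ t : ℂ, Adm eps L t → ∑ m ∈ range (N+1), ρ m * efun eps L m t = 0) :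
    ∀ m, ρ m = 0 := by
  set b := bb eps L with hb
  set P : Polynomial ℂ := Polynomial.C (ρ 0) * ∏ i ∈ range N, (Polynomial.X - Polynomial.C (b i))
    + ∑ j ∈ range N, Polynomial.C (2 * alC eps L j * ρ (j+1)) *
        ∏ i ∈ (range N).erase j, (Polynomial.X - Polynomial.C (b i)) with hP
  have evalP : ∀ s : ℂ, P.eval s = ρ 0 * ∏ i ∈ range N, (s - b i)
      + ∑ j ∈ range N, 2 * alC eps L j * ρ (j+1) * ∏ i ∈ (range N).erase j, (s - b i) := by
    intro s
    simp [hP, Polynomial.eval_prod, Polynomial.eval_finset_sum]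
  have key : ∀ t : ℂ, Adm eps L t → P.eval (t^2) = 0 := by
    intro t ht
    set s := t^2 with hs
    have hsne : ∀ j, s ≠ b j := fun j => Adm_ne_bb ht j
    have hbne : ∀ j, s - b j ≠ 0 := fun j => sub_ne_zero.mpr (hsne j)
    have heq := h t ht
    rw [sum_range_succ' (fun m => ρ m * efun eps L m t) N] at heq
    have hef : ∀ j, efun eps L (j+1) t = -(2 * alC eps L j) * (b j - s)⁻¹ := by
      intro j
      have h1 := efun_succ heps hL ht j
      have h2 : (2 * alC eps L j) ≠ 0 := mul_ne_zero two_ne_zero (alC_ne heps hL j)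
      rw [← hs, ← hb] at h1
      rw [h1, show -(2 * alC eps L j) * (-(2 * alC eps L j)⁻¹ * efun eps L (j+1) t)
        = ((2 * alC eps L j) * (2 * alC eps L j)⁻¹) * efun eps L (j+1) t by ring,
        mul_inv_cancel₀ h2, one_mul]
    have heq2 : ρ 0 + ∑ j ∈ range N, 2 * alC eps L j * ρ (j+1) * (s - b j)⁻¹ = 0 := by
      rw [efun, if_pos rfl, mul_one] at heq
      rw [← heq, add_comm]
      congr 1
      refine sum_congr rfl fun j _ => ?_
      rw [hef j, show b j - s = -(s - b j) by ring, inv_neg]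
      ring
    have hprod : ∀ j ∈ range N, (s - b j)⁻¹ * ∏ i ∈ range N, (s - b i)
        = ∏ i ∈ (range N).erase j, (s - b i) := by
      intro j hj
      rw [← Finset.mul_prod_erase _ _ hj, ← mul_assoc, inv_mul_cancel₀ (hbne j), one_mul]
    rw [evalP]
    calc ρ 0 * ∏ i ∈ range N, (s - b i)
        + ∑ j ∈ range N, 2 * alC eps L j * ρ (j+1) * ∏ i ∈ (range N).erase j, (s - b i)
        = (ρ 0 + ∑ j ∈ range N, 2 * alC eps L j * ρ (j+1) * (s - b j)⁻¹)
            * ∏ i ∈ range N, (s - b i) := by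
          rw [add_mul, sum_mul]
          congr 1
          refine sum_congr rfl fun j hj => ?_
          rw [← hprod j hj]
          ring
      _ = 0 := by rw [heq2, zero_mul]
  have hsq : ∀ n : ℕ, (((n:ℝ):ℂ) * Complex.I)^2 = -((n:ℂ))^2 := by
    intro n
    rw [mul_pow, Complex.I_sq]
    push_cast
    ring
  have hinf : {x : ℂ | P.IsRoot x}.Infinite := by
    refine Set.infinite_of_injective_forall_mem
      (f := fun n : ℕ => ((((n:ℕ):ℝ):ℂ) * Complex.I)^2) ?_ ?_
    · intro m n hmn
      simp only [hsq] at hmn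
      have : (m:ℂ)^2 = (n:ℂ)^2 := by linear_combination -hmn
      have h2 : ((m^2 : ℕ) : ℂ) = ((n^2 : ℕ) : ℂ) := by push_cast; exact this
      have h3 : m^2 = n^2 := Nat.cast_injective h2
      nlinarith
    · intro n
      exact key _ (adm_I_mul heps hL n)
  have hP0 : P = 0 := Polynomial.eq_zero_of_infinite_isRoot P hinf
  have hsucc : ∀ j ∈ range N, ρ (j+1) = 0 := by
    intro j hj
    have h0 : P.eval (b j) = 0 := by rw [hP0]; simp
    rw [evalP] at h0
    have hfirst : ρ 0 * ∏ i ∈ range N, (b j - b i) = 0 := by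
      rw [prod_eq_zero hj (by ring), mul_zero]
    have hsum : ∑ j' ∈ range N, 2 * alC eps L j' * ρ (j'+1) *
        ∏ i ∈ (range N).erase j', (b j - b i)
        = 2 * alC eps L j * ρ (j+1) * ∏ i ∈ (range N).erase j, (b j - b i) := by
      refine sum_eq_single j (fun j' hj' hne => ?_) (fun habs => absurd hj habs)
      rw [prod_eq_zero (mem_erase.mpr ⟨Ne.symm hne, hj⟩) (by ring), mul_zero]
    rw [hfirst, hsum, zero_add] at h0
    have hprodne : ∏ i ∈ (range N).erase j, (b j - b i) ≠ 0 := by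
      refine prod_ne_zero_iff.mpr fun i hi => sub_ne_zero.mpr fun hcnt => ?_
      exact (mem_erase.mp hi).1 (bb_inj heps hL hcnt.symm)
    have h2 : (2 * alC eps L j) ≠ 0 := mul_ne_zero two_ne_zero (alC_ne heps hL j)
    rcases mul_eq_zero.mp h0 with h' | h'
    · rcases mul_eq_zero.mp h' with h'' | h''
      · exact absurd h'' h2
      · exact h''
    · exact absurd h' hprodne
  have hzero : ρ 0 = 0 := by
    have heq := h (((1:ℝ):ℂ) * Complex.I) (adm_I_mul heps hL 1)
    rw [sum_range_succ' (fun m => ρ m * efun eps L m _) N] at heq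
    rw [efun, if_pos rfl, mul_one] at heq
    have : ∀ j ∈ range N, ρ (j+1) * efun eps L (j+1) (((1:ℝ):ℂ) * Complex.I) = 0 := by
      intro j hj
      rw [hsucc j hj, zero_mul]
    rw [sum_congr rfl this, sum_const_zero, zero_add] at heq
    exact heq
  intro m
  match m with
  | 0 => exact hzero
  | (j+1) =>
    by_cases hj : j < N
    · exact hsucc j (mem_range.mpr hj)
    · exact hρ (j+1) (by omega)

/-! ### `e_m` lies in the span of the `g_k` -/

lemma e_in_span (a : ℝ) (ha : -1 < a) (m : ℕ) : ∃ d : ℕ → ℂ, (∀ k, m < k → d k = 0) ∧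
    ∀ t : ℂ, Adm eps L t → efun eps L m t = ∑ k ∈ range (m+1), d k * gfun a eps L k t := by
  induction m using Nat.strong_induction_on with
  | _ m IH =>
    rcases Nat.eq_zero_or_pos m with hm | hm
    · subst hm
      refine ⟨fun k => if k = 0 then 1 else 0, fun k hk => if_neg (by omega), fun t ht => ?_⟩
      simp [efun, gfun_zero_eq]
    · choose D hD1 hD2 using fun (j : ℕ) (hj : j < m) => IH j hj
      set c := rk a eps L m with hc
      have hcm : c m ≠ 0 := rk_diag_ne heps hL a ha hm
      set D' : ℕ → ℕ → ℂ := fun j => if h : j < m then D j h else 0 with hD'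
      have hD'1 : ∀ j (hj : j < m), ∀ k, j < k → D' j k = 0 := by
        intro j hj k hk
        simp only [hD', dif_pos hj]
        exact hD1 j hj k hk
      have hD'2 : ∀ j (hj : j < m), ∀ t : ℂ, Adm eps L t →
          efun eps L j t = ∑ k ∈ range (j+1), D' j k * gfun a eps L k t := by
        intro j hj t ht
        simp only [hD', dif_pos hj]
        exact hD2 j hj t ht
      refine ⟨fun k => (c m)⁻¹ * ((if k = m then 1 else 0) - ∑ j ∈ range m, c j * D' j k),
        ?_, ?_⟩
      · intro k hk
        show (c m)⁻¹ * ((if k = m then (1:ℂ) else 0) - ∑ j ∈ range m, c j * D' j k) = 0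
        have h1 : (if k = m then (1:ℂ) else 0) = 0 := if_neg (by omega)
        have h2 : ∀ j ∈ range m, c j * D' j k = 0 := by
          intro j hj
          rw [hD'1 j (mem_range.mp hj) k (by have := mem_range.mp hj; omega), mul_zero]
        rw [h1, sum_congr rfl h2, sum_const_zero, sub_zero, mul_zero]
      · intro t ht
        have hg : gfun a eps L m t
            = (∑ j ∈ range m, c j * efun eps L j t) + c m * efun eps L m t := by
          rw [gfun_expand heps hL a m ht, sum_range_succ]
        have hinner : ∀ j ∈ range m, ∑ k ∈ range (m+1), D' j k * gfun a eps L k t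
            = efun eps L j t := by
          intro j hj
          have hjm := mem_range.mp hj
          rw [hD'2 j hjm t ht]
          refine (sum_subset (range_subset_range.mpr (Nat.succ_le_succ hjm.le))
            fun k _ hk => ?_).symm
          rw [hD'1 j hjm k (by have := mem_range.not.mp hk; omega), zero_mul]
        have hfirst : ∑ k ∈ range (m+1), (if k = m then (1:ℂ) else 0) * gfun a eps L k t
            = gfun a eps L m t := by
          simp [ite_mul]
        have hsecond : ∑ k ∈ range (m+1), (∑ j ∈ range m, c j * D' j k) * gfun a eps L k t
            = ∑ j ∈ range m, c j * efun eps L j t := by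
          have h1 : ∀ k ∈ range (m+1), (∑ j ∈ range m, c j * D' j k) * gfun a eps L k t
              = ∑ j ∈ range m, c j * (D' j k * gfun a eps L k t) := fun k _ => by
            rw [sum_mul]; exact sum_congr rfl fun j _ => by ring
          rw [sum_congr rfl h1, sum_comm]
          refine sum_congr rfl fun j hj => ?_
          rw [← mul_sum, hinner j hj]
        have expand : ∑ k ∈ range (m+1),
            (c m)⁻¹ * ((if k = m then 1 else 0) - ∑ j ∈ range m, c j * D' j k)
              * gfun a eps L k t
            = (c m)⁻¹ * (gfun a eps L m t - ∑ j ∈ range m, c j * efun eps L j t) := by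
          have h1 : ∀ k ∈ range (m+1),
              (c m)⁻¹ * ((if k = m then (1:ℂ) else 0) - ∑ j ∈ range m, c j * D' j k)
                * gfun a eps L k t
              = (c m)⁻¹ * (((if k = m then (1:ℂ) else 0) - ∑ j ∈ range m, c j * D' j k)
                * gfun a eps L k t) := fun k _ => by ring
          rw [sum_congr rfl h1, ← mul_sum]
          congr 1
          have h2 : ∀ k ∈ range (m+1),
              ((if k = m then (1:ℂ) else 0) - ∑ j ∈ range m, c j * D' j k) * gfun a eps L k t
              = (if k = m then (1:ℂ) else 0) * gfun a eps L k t
                - (∑ j ∈ range m, c j * D' j k) * gfun a eps L k t := fun k _ => by ring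
          rw [sum_congr rfl h2, sum_sub_distrib, hfirst, hsecond]
        show efun eps L m t = ∑ k ∈ range (m+1),
          (c m)⁻¹ * ((if k = m then 1 else 0) - ∑ j ∈ range m, c j * D' j k) * gfun a eps L k t
        rw [expand, hg, add_sub_cancel_left, ← mul_assoc, inv_mul_cancel₀ hcm, one_mul]

/-! ### Uniqueness of expansions in the `g_k` -/

lemma expansion_unique (a : ℝ) (ha : -1 < a) {φ : ℂ → ℂ} (c1 c2 : ℕ → ℂ)
    (h1f : (Function.support c1).Finite) (h2f : (Function.support c2).Finite)
    (h1 : ∀ t, Adm eps L t → φ t = ∑ᶠ k, c1 k * gfun a eps L k t)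
    (h2 : ∀ t, Adm eps L t → φ t = ∑ᶠ k, c2 k * gfun a eps L k t) : c1 = c2 := by
  obtain ⟨N1, hN1⟩ := supp_bound h1f
  obtain ⟨N2, hN2⟩ := supp_bound h2f
  set N := max N1 N2 with hN
  set dd : ℕ → ℂ := fun k => c1 k - c2 k with hdd
  have hddz : ∀ k, N ≤ k → dd k = 0 := by
    intro k hk
    simp only [hdd]
    rw [hN1 k (le_trans (le_max_left _ _) hk), hN2 k (le_trans (le_max_right _ _) hk), sub_zero]
  have hzero : ∀ t, Adm eps L t → ∑ k ∈ range N, dd k * gfun a eps L k t = 0 := by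
    intro t ht
    have e1 : ∑ᶠ k, c1 k * gfun a eps L k t = ∑ k ∈ range N, c1 k * gfun a eps L k t :=
      finsum_mul_eq _ _ (fun m hm => hN1 m (le_trans (le_max_left _ _) hm))
    have e2 : ∑ᶠ k, c2 k * gfun a eps L k t = ∑ k ∈ range N, c2 k * gfun a eps L k t :=
      finsum_mul_eq _ _ (fun m hm => hN2 m (le_trans (le_max_right _ _) hm))
    calc ∑ k ∈ range N, dd k * gfun a eps L k t
        = (∑ k ∈ range N, c1 k * gfun a eps L k t)
          - ∑ k ∈ range N, c2 k * gfun a eps L k t := by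
          rw [← sum_sub_distrib]
          exact sum_congr rfl fun k _ => by simp only [hdd]; ring
      _ = φ t - φ t := by rw [← e1, ← e2, ← h1 t ht, ← h2 t ht]
      _ = 0 := sub_self _
  set ρ : ℕ → ℂ := fun p => ∑ k ∈ range N, dd k * rk a eps L k p with hρdef
  have hρtail : ∀ p, N ≤ p → ρ p = 0 := by
    intro p hp
    simp only [hρdef]
    refine sum_eq_zero fun k hk => ?_
    rw [rk_eq_zero_of_gt a eps L (lt_of_lt_of_le (mem_range.mp hk) hp), mul_zero]
  have heqρ : ∀ t, Adm eps L t → ∑ p ∈ range (N+1), ρ p * efun eps L p t = 0 := by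
    intro t ht
    have hstep1 : ∀ p ∈ range (N+1), ρ p * efun eps L p t
        = ∑ k ∈ range N, dd k * (rk a eps L k p * efun eps L p t) := by
      intro p _
      simp only [hρdef]
      rw [sum_mul]
      exact sum_congr rfl fun k _ => by ring
    have hinner : ∀ k ∈ range N, ∑ p ∈ range (N+1), rk a eps L k p * efun eps L p t
        = gfun a eps L k t := by
      intro k hk
      have hkN := mem_range.mp hk
      rw [gfun_expand heps hL a k ht]
      refine (sum_subset (range_subset_range.mpr (Nat.succ_le_succ hkN.le))
        fun p _ hp => ?_).symm
      rw [rk_eq_zero_of_gt a eps L (by have := mem_range.not.mp hp; omega), zero_mul]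
    calc ∑ p ∈ range (N+1), ρ p * efun eps L p t
        = ∑ p ∈ range (N+1), ∑ k ∈ range N, dd k * (rk a eps L k p * efun eps L p t) :=
          sum_congr rfl hstep1
      _ = ∑ k ∈ range N, ∑ p ∈ range (N+1), dd k * (rk a eps L k p * efun eps L p t) :=
          sum_comm
      _ = ∑ k ∈ range N, dd k * gfun a eps L k t := by
          refine sum_congr rfl fun k hk => ?_
          rw [← mul_sum, hinner k hk]
      _ = 0 := hzero t ht
  have hρ0 : ∀ p, ρ p = 0 :=
    indep heps hL N ρ (fun m hm => hρtail m hm.le) heqρ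
  have hddall : ∀ k, dd k = 0 := by
    intro k
    by_contra hk
    set S := (range N).filter (fun k' => dd k' ≠ 0) with hS
    have hkN : k ∈ range N := by
      rw [mem_range]
      by_contra hh
      exact hk (hddz k (by omega))
    have hSne : S.Nonempty := ⟨k, mem_filter.mpr ⟨hkN, hk⟩⟩
    set k0 := S.max' hSne with hk0def
    have hk0S := S.max'_mem hSne
    have hk0 : dd k0 ≠ 0 := (mem_filter.mp hk0S).2
    have hk0N : k0 ∈ range N := (mem_filter.mp hk0S).1
    have htop : ∀ k', k0 < k' → dd k' = 0 := by
      intro k' hk'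
      by_contra hh
      have hk'N : k' ∈ range N := by
        rw [mem_range]
        by_contra hhh
        exact hh (hddz k' (by omega))
      have := S.le_max' k' (mem_filter.mpr ⟨hk'N, hh⟩)
      omega
    have h0 := hρ0 k0
    simp only [hρdef] at h0
    rw [sum_eq_single k0 (fun b hb hbne => ?_) (fun h => absurd hk0N h)] at h0
    · rcases mul_eq_zero.mp h0 with h | h
      · exact hk0 h
      · rcases Nat.eq_zero_or_pos k0 with h00 | h00
        · rw [h00, rk_zero] at h
          exact one_ne_zero h
        · exact rk_diag_ne heps hL a ha h00 h
    · rcases lt_or_gt_of_ne hbne with hlt | hgt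
      · rw [rk_eq_zero_of_gt a eps L hlt, mul_zero]
      · rw [htop b hgt, zero_mul]
  funext k
  exact sub_eq_zero.mp (hddall k)

end
end GB

/-- **The functions `g_k` form a basis of `F(ε,L)`** (step 1 of Lemma 4.1 in the paper):
(i) each `g_k(·;a,ε,L)` lies in `F(ε,L)`; moreover for `k ≥ 1` its singularities are simple
poles contained in `{±A_1,…,±A_k}` and the residue at `±A_k` is nonzero; (ii) every
`φ ∈ F(ε,L)` admits a unique expansion as a finite linear combination of the `g_k`. -/
theorem gfun_basis (a eps : ℝ) (ha : -1 < a) (heps : 0 ≤ eps) (L : ℕ) (hL : 2 ≤ L) :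
    (∀ k : ℕ, InF eps L (gfun a eps L k)) ∧
    (∀ k : ℕ, 1 ≤ k → ∃ r : ℕ → ℂ, (∀ m : ℕ, k < m → r m = 0) ∧ r k ≠ 0 ∧
      ∀ t : ℂ, Adm eps L t → gfun a eps L k t = ∑ᶠ m : ℕ, r m * efun eps L m t) ∧
    (∀ φ : ℂ → ℂ, InF eps L φ →
      ∃! cc : ℕ → ℂ, (Function.support cc).Finite ∧
        ∀ t : ℂ, Adm eps L t → φ t = ∑ᶠ k : ℕ, cc k * gfun a eps L k t) := by
  have hexp : ∀ k : ℕ, ∀ t : ℂ, Adm eps L t →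
      gfun a eps L k t = ∑ᶠ m : ℕ, GB.rk a eps L k m * efun eps L m t := by
    intro k t ht
    rw [GB.gfun_expand heps hL a k ht]
    exact (GB.finsum_mul_eq _ _
      (fun m hm => GB.rk_eq_zero_of_gt a eps L (by omega))).symm
  have hsupp : ∀ k : ℕ, (Function.support (GB.rk a eps L k)).Finite := by
    intro k
    refine Set.Finite.subset (Set.finite_Iio (k+1)) fun m hm => ?_
    simp only [Function.mem_support] at hm
    simp only [Set.mem_Iio]
    by_contra h
    exact hm (GB.rk_eq_zero_of_gt a eps L (by omega))
  refine ⟨?_, ?_, ?_⟩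
  · exact fun k => ⟨GB.rk a eps L k, hsupp k, hexp k⟩
  · intro k hk
    exact ⟨GB.rk a eps L k, fun m hm => GB.rk_eq_zero_of_gt a eps L hm,
      GB.rk_diag_ne heps hL a ha hk, hexp k⟩
  · intro φ hφ
    obtain ⟨r, hrfin, hrφ⟩ := hφ
    obtain ⟨N, hN⟩ := GB.supp_bound hrfin
    choose D hD1 hD2 using GB.e_in_span heps hL a ha
    set cc : ℕ → ℂ := fun k => ∑ m ∈ range N, r m * D m k with hcc
    have hccz : ∀ k, N ≤ k → cc k = 0 := by
      intro k hk
      simp only [hcc]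
      refine sum_eq_zero fun m hm => ?_
      rw [hD1 m k (by have := mem_range.mp hm; omega), mul_zero]
    have hccfin : (Function.support cc).Finite := by
      refine Set.Finite.subset (Set.finite_Iio N) fun k hk => ?_
      simp only [Function.mem_support] at hk
      simp only [Set.mem_Iio]
      by_contra h
      exact hk (hccz k (by omega))
    have hccval : ∀ t : ℂ, Adm eps L t → φ t = ∑ᶠ k : ℕ, cc k * gfun a eps L k t := by
      intro t ht
      rw [GB.finsum_mul_eq cc _ hccz]
      have hinner : ∀ m ∈ range N, ∑ k ∈ range N, D m k * gfun a eps L k t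
          = efun eps L m t := by
        intro m hm
        have hmN := mem_range.mp hm
        rw [hD2 m t ht]
        refine (sum_subset (range_subset_range.mpr (by omega)) fun k _ hk => ?_).symm
        rw [hD1 m k (by have := mem_range.not.mp hk; omega), zero_mul]
      calc φ t = ∑ᶠ m : ℕ, r m * efun eps L m t := hrφ t ht
        _ = ∑ m ∈ range N, r m * efun eps L m t :=
            GB.finsum_mul_eq _ _ (fun m hm => hN m hm)
        _ = ∑ m ∈ range N, r m * ∑ k ∈ range N, D m k * gfun a eps L k t := by
            refine sum_congr rfl fun m hm => ?_
            rw [hinner m hm]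
        _ = ∑ m ∈ range N, ∑ k ∈ range N, r m * D m k * gfun a eps L k t := by
            refine sum_congr rfl fun m _ => ?_
            rw [mul_sum]
            exact sum_congr rfl fun k _ => by ring
        _ = ∑ k ∈ range N, ∑ m ∈ range N, r m * D m k * gfun a eps L k t := sum_comm
        _ = ∑ k ∈ range N, cc k * gfun a eps L k t := by
            refine sum_congr rfl fun k _ => ?_
            simp only [hcc]
            rw [sum_mul]
    refine ⟨cc, ⟨hccfin, hccval⟩, ?_⟩
    rintro y ⟨hyfin, hyval⟩
    exact GB.expansion_unique heps hL a ha y cc hyfin hccfin hyval hccval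
end

section
/- Let a > −1 and ε ≥ 0 be real, let L ≥ 2 and K ≥ 1 be integers, and let κ ∈ Sign⁺_K with k_i := κ_i+K−i. Then, for every (t_1,…,t_K) ∈ ℂ^K at which all the determinants and Pochhammer denominators involved are nonzero, G_{κ,K}(t_1,…,t_K)/d_K(κ;ε) = Σ_{μ∈Sign⁺_K, μ_i ≤ κ_i for all i} A_{μ,κ} · σ_{μ,K}(t_1²,…,t_K² | (L+ε)², (L+ε+1)², (L+ε+2)², …), where, with m_i := μ_i+K−i, A_{μ,κ} := ∏_{i=1}^{K} [(L)_{m_i}(L+a)_{m_i}(a+1)_{K−i}(K−i)!]/[(a+1)_{m_i}·m_i!·(L)_{K−i}(L+a)_{K−i}] · S_{μ,K}((κ_1+K−1+ε)²,…,(κ_K+ε)² | ε², (ε+1)², (ε+2)², …). -/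
open Finset

/-- Pochhammer symbol over `ℝ`. -/
noncomputable def pochR (x : ℝ) (n : ℕ) : ℝ := (ascPochhammer ℝ n).eval x

/-- `Sign⁺_N`: `N`-tuples of integers `ν₁ ≥ ⋯ ≥ ν_N ≥ 0`. -/
def SignP (N : ℕ) : Type := {ν : Fin N → ℤ // Antitone ν ∧ ∀ i, 0 ≤ ν i}

/-- Vandermonde product `∏_{i<j} (x_i − x_j)`. -/
noncomputable def vmonde {n : ℕ} (x : Fin n → ℝ) : ℝ :=
  ∏ i : Fin n, ∏ j ∈ Finset.Ioi i, (x i - x j)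

/-- `(x | c₀,c₁,…)^m = (x−c₀)(x−c₁)⋯(x−c_{m−1})`. -/
noncomputable def mfact (x : ℝ) (cs : ℕ → ℝ) (m : ℕ) : ℝ :=
  ∏ j ∈ Finset.range m, (x - cs j)

/-- Multiparameter Schur polynomial `S_{μ,M}(x | c) = det[(x_i | c)^{μ_r+M−r}] / V(x)`. -/
noncomputable def multiSchur {M : ℕ} (μ : Fin M → ℤ) (x : Fin M → ℝ) (cs : ℕ → ℝ) : ℝ :=
  Matrix.det (Matrix.of fun i r : Fin M => mfact (x i) cs ((μ r).toNat + (M - 1 - (r:ℕ)))) /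
    vmonde x

/-- Dual Schur function
`σ_{μ,K}(y | c₁,c₂,…) = det[1/((y_j−c₁)⋯(y_j−c_{μ_r+K−r}))] / det[1/((y_j−c₁)⋯(y_j−c_{K−r}))]`
(here `cs s` stands for `c_{s+1}`). -/
noncomputable def dualSchur {K : ℕ} (μ : Fin K → ℤ) (y : Fin K → ℂ) (cs : ℕ → ℂ) : ℂ :=
  Matrix.det (Matrix.of fun j r : Fin K =>
      1 / ∏ s ∈ Finset.range ((μ r).toNat + (K - 1 - (r:ℕ))), (y j - cs s)) /
  Matrix.det (Matrix.of fun j r : Fin K =>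
      1 / ∏ s ∈ Finset.range (K - 1 - (r:ℕ)), (y j - cs s))

/-- Schur-type function `G_{κ,K}(t₁,…,t_K)` built from the `g_k`. -/
noncomputable def Gfun (a eps : ℝ) (L : ℕ) {K : ℕ} (κ : Fin K → ℤ) (t : Fin K → ℂ) : ℂ :=
  Matrix.det (Matrix.of fun i j : Fin K => gfun a eps L ((κ i).toNat + (K - 1 - (i:ℕ))) (t j)) /
  Matrix.det (Matrix.of fun i j : Fin K => gfun a eps L (K - 1 - (i:ℕ)) (t j))

/-- `d_K(κ; ε) = ∏_{i<j} ((k_i+ε)²−(k_j+ε)²)/((K−i+ε)²−(K−j+ε)²)` with `k_i = κ_i+K−i`. -/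
noncomputable def dfun (K : ℕ) (κ : Fin K → ℤ) (eps : ℝ) : ℝ :=
  ∏ i : Fin K, ∏ j ∈ Finset.Ioi i,
    (((κ i : ℝ) + (K:ℝ) - 1 - ((i:ℕ):ℝ) + eps)^2 - ((κ j : ℝ) + (K:ℝ) - 1 - ((j:ℕ):ℝ) + eps)^2) /
    (((K:ℝ) - 1 - ((i:ℕ):ℝ) + eps)^2 - ((K:ℝ) - 1 - ((j:ℕ):ℝ) + eps)^2)

/-- The coefficient `A_{μ,κ}`: with `m_i = μ_i+K−i`,
`A_{μ,κ} = ∏_i [(L)_{m_i}(L+a)_{m_i}(a+1)_{K−i}(K−i)!]/[(a+1)_{m_i} m_i! (L)_{K−i}(L+a)_{K−i}]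
 · S_{μ,K}((κ₁+K−1+ε)²,…,(κ_K+ε)² | ε², (ε+1)², …)`. -/
noncomputable def Acoef (a eps : ℝ) (L K : ℕ) (μ κ : Fin K → ℤ) : ℝ :=
  (∏ i : Fin K,
    (pochR (L:ℝ) ((μ i).toNat + (K - 1 - (i:ℕ))) * pochR ((L:ℝ)+a) ((μ i).toNat + (K - 1 - (i:ℕ))) *
      pochR (a+1) (K - 1 - (i:ℕ)) * (Nat.factorial (K - 1 - (i:ℕ)) : ℝ)) /
    (pochR (a+1) ((μ i).toNat + (K - 1 - (i:ℕ))) *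
      (Nat.factorial ((μ i).toNat + (K - 1 - (i:ℕ))) : ℝ) *
      pochR (L:ℝ) (K - 1 - (i:ℕ)) * pochR ((L:ℝ)+a) (K - 1 - (i:ℕ)))) *
  multiSchur μ (fun i : Fin K => ((κ i : ℝ) + (K:ℝ) - 1 - ((i:ℕ):ℝ) + eps)^2)
    (fun s : ℕ => (eps + (s:ℝ))^2)


section Aux


open Finset

variable {K N : ℕ}

lemma strictAnti_add_antitone {g : Fin K → Fin N} (hg : StrictAnti g) :
    Antitone (fun i : Fin K => (g i : ℕ) + (i : ℕ)) := by
  intro i j hij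
  have hc : (Finset.Icc i j).card ≤ (Finset.Icc (g j) (g i)).card := by
    apply Finset.card_le_card_of_injOn g
    · intro a ha
      rw [Finset.mem_coe, Finset.mem_Icc] at ha ⊢
      exact ⟨hg.antitone ha.2, hg.antitone ha.1⟩
    · exact hg.injective.injOn
  rw [Fin.card_Icc, Fin.card_Icc] at hc
  have := Fin.le_def.mp hij
  have := Fin.le_def.mp (hg.antitone hij)
  simp only []
  omega

lemma strictAnti_lb {g : Fin K → Fin N} (hg : StrictAnti g) (r : Fin K) :
    K - 1 - (r : ℕ) ≤ (g r : ℕ) := by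
  have hK : 0 < K := r.pos
  have hle : r ≤ (⟨K - 1, by omega⟩ : Fin K) := by
    rw [Fin.le_def]; simp; omega
  have := strictAnti_add_antitone hg hle
  simp only [] at this
  omega

open Classical in
/-- Sorts an injective tuple into a strictly antitone tuple plus a permutation. -/
noncomputable def sortPair (r : Fin K → Fin N) : (Fin K → Fin N) × Equiv.Perm (Fin K) :=
  if h : Function.Injective r then
    have hc : (Finset.image r Finset.univ).card = K := by
      rw [Finset.card_image_of_injective _ h, Finset.card_univ, Fintype.card_fin]
    ⟨fun i => (Finset.image r Finset.univ).orderEmbOfFin hc (Fin.rev i),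
     Equiv.ofBijective
       (fun i => Fin.rev (((Finset.image r Finset.univ).orderIsoOfFin hc).symm
         ⟨r i, by simp [Finset.mem_image]⟩))
       (Finite.injective_iff_bijective.mp (by
         intro a b hab
         have := congrArg Fin.rev hab
         rw [Fin.rev_rev, Fin.rev_rev] at this
         have h2 := congrArg (fun x => (((Finset.image r Finset.univ).orderIsoOfFin hc) x : Fin N)) this
         simp only [Equiv.apply_symm_apply, OrderIso.apply_symm_apply] at h2
         exact h (by simpa using h2)))⟩
  else ⟨r, 1⟩

lemma sortPair_strictAnti {r : Fin K → Fin N} (h : Function.Injective r) :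
    StrictAnti (sortPair r).1 := by
  simp only [sortPair, dif_pos h]
  intro a b hab
  exact ((Finset.image r Finset.univ).orderEmbOfFin _).strictMono (by
    rw [Fin.rev_lt_rev]; exact hab)

lemma sortPair_comp {r : Fin K → Fin N} (h : Function.Injective r) :
    (sortPair r).1 ∘ (sortPair r).2 = r := by
  simp only [sortPair, dif_pos h]
  funext i
  simp only [Function.comp_apply, Equiv.ofBijective_apply, Fin.rev_rev]
  rw [← Finset.coe_orderIsoOfFin_apply]
  simp

lemma sortPair_eq {g : Fin K → Fin N} (hg : StrictAnti g) (σ : Equiv.Perm (Fin K)) :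
    sortPair (g ∘ σ) = (g, σ) := by
  have hinj : Function.Injective (g ∘ σ) := hg.injective.comp σ.injective
  have himg : Finset.image (g ∘ σ) Finset.univ = Finset.image g Finset.univ := by
    ext x
    simp only [Finset.mem_image, Function.comp_apply]
    constructor
    · rintro ⟨a, _, rfl⟩; exact ⟨σ a, Finset.mem_univ _, rfl⟩
    · rintro ⟨a, _, rfl⟩; exact ⟨σ.symm a, Finset.mem_univ _, by simp⟩
  have hc : (Finset.image (g ∘ σ) Finset.univ).card = K := by
    rw [Finset.card_image_of_injective _ hinj, Finset.card_univ, Fintype.card_fin]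
  have hg1 : (sortPair (g ∘ σ)).1 = g := by
    simp only [sortPair, dif_pos hinj]
    have hmono : StrictMono (fun i => g (Fin.rev i)) := by
      intro a b hab
      exact hg (by rw [Fin.rev_lt_rev]; exact hab)
    have hmem : ∀ i, g (Fin.rev i) ∈ Finset.image (g ∘ σ) Finset.univ := by
      intro i
      rw [himg]
      exact Finset.mem_image_of_mem _ (Finset.mem_univ _)
    have := Finset.orderEmbOfFin_unique hc hmem hmono
    funext i
    rw [← congrFun this (Fin.rev i), Fin.rev_rev]
  have hg2 : (sortPair (g ∘ σ)).2 = σ := by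
    apply Equiv.coe_fn_injective
    funext i
    apply hg.injective
    have := congrFun (sortPair_comp hinj) i
    rw [hg1] at this
    exact this
  exact Prod.ext hg1 hg2

/-- Cauchy–Binet, in strictly-antitone-tuple form. -/
lemma cauchy_binet (A : Matrix (Fin K) (Fin N) ℂ) (B : Matrix (Fin N) (Fin K) ℂ) :
    (A * B).det = ∑ g ∈ Finset.univ.filter (fun g : Fin K → Fin N => StrictAnti g),
      (Matrix.of fun i j : Fin K => A i (g j)).det *
      (Matrix.of fun i j : Fin K => B (g i) j).det := by
  classical
  have h1 : (A * B).det = Matrix.detRowAlternating (fun i => ∑ n : Fin N, A i n • B n) := by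
    congr 1
    ext i j
    simp [Matrix.mul_apply, Finset.sum_apply]
  have h2 : Matrix.detRowAlternating (fun i => ∑ n : Fin N, A i n • B n)
      = ∑ r : Fin K → Fin N, Matrix.detRowAlternating (fun i => A i (r i) • B (r i)) :=
    (Matrix.detRowAlternating (R := ℂ) (n := Fin K)).toMultilinearMap.map_sum
      (g := fun i n => A i n • B n)
  have h3 : ∀ r : Fin K → Fin N, Matrix.detRowAlternating (fun i => A i (r i) • B (r i))
      = (∏ i, A i (r i)) * Matrix.detRowAlternating (fun i => B (r i)) := by
    intro r
    rw [show (∏ i, A i (r i)) * Matrix.detRowAlternating (fun i => B (r i))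
      = (∏ i, A i (r i)) • Matrix.detRowAlternating (fun i => B (r i)) from rfl]
    exact (Matrix.detRowAlternating (R := ℂ) (n := Fin K)).toMultilinearMap.map_smul_univ
      (fun i => A i (r i)) (fun i => B (r i))
  rw [h1, h2]
  simp only [h3]
  -- drop non-injective r
  rw [← Finset.sum_filter_add_sum_filter_not Finset.univ (fun r : Fin K → Fin N => Function.Injective r)]
  have h4 : ∑ r ∈ Finset.univ.filter (fun r : Fin K → Fin N => ¬ Function.Injective r),
      (∏ i, A i (r i)) * Matrix.detRowAlternating (fun i => B (r i)) = 0 := by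
    apply Finset.sum_eq_zero
    intro r hr
    rw [Finset.mem_filter] at hr
    have : ¬ Function.Injective r := hr.2
    rw [Function.not_injective_iff] at this
    obtain ⟨a, b, hab, hne⟩ := this
    rw [Matrix.detRowAlternating.map_eq_zero_of_eq (fun i => B (r i)) (congrArg (fun i => B i) hab) hne]
    ring
  rw [h4, add_zero]
  -- rewrite RHS dets
  have hdetA : ∀ g : Fin K → Fin N, (Matrix.of fun i j : Fin K => A i (g j)).det
      = ∑ σ : Equiv.Perm (Fin K), Equiv.Perm.sign σ • ∏ i, A i (g (σ i)) := by
    intro g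
    rw [← Matrix.det_transpose, Matrix.det_apply]
    congr 1
  simp only [hdetA]
  have hdetB : ∀ g : Fin K → Fin N, (Matrix.of fun i j : Fin K => B (g i) j).det
      = Matrix.detRowAlternating (fun i => B (g i)) := by intro g; rfl
  simp only [hdetB]
  -- bijection between injective maps and pairs (strictly antitone, permutation)
  simp only [Finset.sum_mul]
  rw [← Finset.sum_product' (s := Finset.univ.filter (fun g : Fin K → Fin N => StrictAnti g))
      (t := (Finset.univ : Finset (Equiv.Perm (Fin K))))]
  apply Finset.sum_nbij' (i := fun r => sortPair r) (j := fun p => p.1 ∘ p.2)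
  · intro r hr
    rw [Finset.mem_filter] at hr
    rw [Finset.mem_product, Finset.mem_filter]
    exact ⟨⟨Finset.mem_univ _, sortPair_strictAnti hr.2⟩, Finset.mem_univ _⟩
  · intro p hp
    rw [Finset.mem_product, Finset.mem_filter] at hp
    rw [Finset.mem_filter]
    exact ⟨Finset.mem_univ _, hp.1.2.injective.comp p.2.injective⟩
  · intro r hr
    rw [Finset.mem_filter] at hr
    exact sortPair_comp hr.2
  · intro p hp
    rw [Finset.mem_product, Finset.mem_filter] at hp
    rw [show p = (p.1, p.2) from rfl]
    exact sortPair_eq hp.1.2 p.2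
  · intro r hr
    rw [Finset.mem_filter] at hr
    have hcomp := sortPair_comp hr.2
    set g := (sortPair r).1 with hg
    set σ := (sortPair r).2 with hσ
    have hterm : ∀ i, r i = g (σ i) := fun i => (congrFun hcomp i).symm
    calc (∏ i, A i (r i)) * Matrix.detRowAlternating (fun i => B (r i))
        = (∏ i, A i (g (σ i))) * Matrix.detRowAlternating ((fun i => B (g i)) ∘ σ) := by
          congr 1
          · exact Finset.prod_congr rfl fun i _ => by rw [hterm]
          · congr 1; funext i; simp only [Function.comp_apply]; rw [hterm]
      _ = (∏ i, A i (g (σ i))) * (Equiv.Perm.sign σ • Matrix.detRowAlternating (fun i => B (g i))) := by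
          congr 1
          exact Matrix.detRowAlternating.map_perm (fun i => B (g i)) σ
      _ = (Equiv.Perm.sign σ • ∏ i, A i (g (σ i))) * Matrix.detRowAlternating (fun i => B (g i)) := by
          simp only [Units.smul_def, zsmul_eq_mul]
          ring



noncomputable def wC (a eps : ℝ) (L : ℕ) (n : ℕ) : ℂ :=
  pochC (L:ℂ) n * pochC ((L:ℂ) + (a:ℂ)) n / (pochC ((a:ℂ)+1) n * (Nat.factorial n : ℂ))

noncomputable def phiC (eps : ℝ) (n k : ℕ) : ℂ :=
  ∏ s ∈ Finset.range n, (((k:ℂ) + (eps:ℂ))^2 - ((eps:ℂ) + (s:ℂ))^2)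

lemma pochC_prod (x : ℂ) (n : ℕ) : pochC x n = ∏ s ∈ Finset.range n, (x + s) := by
  induction n with
  | zero => simp [pochC]
  | succ m ih =>
    rw [Finset.prod_range_succ, ← ih, pochC, pochC, ascPochhammer_succ_right]
    push_cast
    simp [Polynomial.eval_mul]

lemma phiC_eq_zero {eps : ℝ} {n k : ℕ} (h : k < n) : phiC eps n k = 0 := by
  apply Finset.prod_eq_zero (Finset.mem_range.mpr h)
  ring

lemma pochC_ne_zero_of_pos {x : ℝ} (hx : 0 < x) (n : ℕ) : pochC (x:ℂ) n ≠ 0 := by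
  rw [pochC_prod]
  apply Finset.prod_ne_zero_iff.mpr
  intro s _
  have : ((x:ℂ) + s) = ((x + s : ℝ) : ℂ) := by push_cast; ring
  rw [this, Complex.ofReal_ne_zero]
  positivity

lemma gfun_expand (a eps : ℝ) (ha : -1 < a) (L k N : ℕ) (hk : k < N) (t : ℂ)
    (ht : ∀ m : ℕ, t^2 ≠ ((L:ℂ) + (eps:ℂ) + (m:ℂ))^2) :
    gfun a eps L k t = ∑ n ∈ Finset.range N,
      wC a eps L n * phiC eps n k *
        (∏ s ∈ Finset.range n, (t^2 - ((L:ℂ) + (eps:ℂ) + (s:ℂ))^2))⁻¹ := by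
  have hterm : ∀ n : ℕ,
      (pochC (-(k:ℂ)) n * pochC ((k:ℂ) + 2*(eps:ℂ)) n * pochC (L:ℂ) n * pochC ((L:ℂ) + (a:ℂ)) n) /
      (pochC (-t + (L:ℂ) + (eps:ℂ)) n * pochC (t + (L:ℂ) + (eps:ℂ)) n * pochC ((a:ℂ)+1) n *
        (Nat.factorial n : ℂ))
      = wC a eps L n * phiC eps n k *
        (∏ s ∈ Finset.range n, (t^2 - ((L:ℂ) + (eps:ℂ) + (s:ℂ))^2))⁻¹ := by
    intro n
    have hm1 : pochC (-(k:ℂ)) n * pochC ((k:ℂ) + 2*(eps:ℂ)) n = (-1)^n * phiC eps n k := by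
      rw [pochC_prod, pochC_prod, ← Finset.prod_mul_distrib, phiC]
      rw [show ((-1:ℂ))^n = ∏ _s ∈ Finset.range n, (-1:ℂ) by
        rw [Finset.prod_const, Finset.card_range]]
      rw [← Finset.prod_mul_distrib]
      apply Finset.prod_congr rfl
      intro s _
      ring
    have hm2 : pochC (-t + (L:ℂ) + (eps:ℂ)) n * pochC (t + (L:ℂ) + (eps:ℂ)) n
        = (-1)^n * ∏ s ∈ Finset.range n, (t^2 - ((L:ℂ) + (eps:ℂ) + (s:ℂ))^2) := by
      rw [pochC_prod, pochC_prod, ← Finset.prod_mul_distrib]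
      rw [show ((-1:ℂ))^n = ∏ _s ∈ Finset.range n, (-1:ℂ) by
        rw [Finset.prod_const, Finset.card_range]]
      rw [← Finset.prod_mul_distrib]
      apply Finset.prod_congr rfl
      intro s _
      ring
    have hQ : ∏ s ∈ Finset.range n, (t^2 - ((L:ℂ) + (eps:ℂ) + (s:ℂ))^2) ≠ 0 := by
      apply Finset.prod_ne_zero_iff.mpr
      intro s _
      exact sub_ne_zero.mpr (ht s)
    have hP3 : pochC ((a:ℂ)+1) n ≠ 0 := by
      have : ((a:ℂ)+1) = (((a+1 : ℝ)) : ℂ) := by push_cast; ring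
      rw [this]
      exact pochC_ne_zero_of_pos (by linarith) n
    have hfac : (Nat.factorial n : ℂ) ≠ 0 := by
      exact_mod_cast Nat.factorial_ne_zero n
    rw [hm1, hm2, wC]
    field_simp
  rw [gfun]
  rw [Finset.sum_congr rfl (fun n _ => hterm n)]
  apply Finset.sum_subset
  · exact Finset.range_subset_range.mpr hk
  · intro n _ hn
    rw [Finset.mem_range, not_lt] at hn
    rw [phiC_eq_zero (by omega)]
    ring



open Finset

lemma det_eq_zero_block {K : ℕ} (M : Matrix (Fin K) (Fin K) ℂ) (r : Fin K)
    (h : ∀ i j, r ≤ i → j ≤ r → M i j = 0) : M.det = 0 := by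
  rw [Matrix.det_apply]
  apply Finset.sum_eq_zero
  intro σ _
  have hex : ∃ i, i ≤ r ∧ r ≤ σ i := by
    by_contra hc
    push_neg at hc
    have hmaps : ∀ i ∈ Finset.Iic r, σ i ∈ Finset.Iio r := by
      intro i hi
      rw [Finset.mem_Iic] at hi
      rw [Finset.mem_Iio]
      exact hc i hi
    have hcard := Finset.card_le_card_of_injOn σ hmaps (σ.injective.injOn)
    rw [Fin.card_Iic, Fin.card_Iio] at hcard
    omega
  obtain ⟨i, hir, hri⟩ := hex
  rw [show (∏ j : Fin K, M (σ j) j) = 0 from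
    Finset.prod_eq_zero (Finset.mem_univ i) (h (σ i) i hri hir)]
  simp

lemma det_phiMatrix {K : ℕ} (x : Fin K → ℂ) (cs : ℕ → ℂ) :
    (Matrix.of fun i j : Fin K => ∏ s ∈ Finset.range (j:ℕ), (x i - cs s)).det
      = (Matrix.vandermonde x).det := by
  rw [Matrix.det_eval_matrixOfPolynomials_eq_det_vandermonde x
    (fun j => ∏ s ∈ Finset.range (j:ℕ), (Polynomial.X - Polynomial.C (cs s)))]
  · congr 1
    ext i j
    simp [Polynomial.eval_prod]
  · intro i
    rw [Polynomial.natDegree_prod_of_monic]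
    · simp
    · intro s _
      exact Polynomial.monic_X_sub_C _
  · intro i
    exact Polynomial.monic_prod_of_monic _ _ (fun s _ => Polynomial.monic_X_sub_C _)

lemma prod_Ioi_rev {K : ℕ} (x : Fin K → ℂ) :
    (∏ i : Fin K, ∏ j ∈ Finset.Ioi i, (x (Fin.rev j) - x (Fin.rev i)))
      = ∏ i : Fin K, ∏ j ∈ Finset.Ioi i, (x i - x j) := by
  rw [Finset.prod_sigma' (s := (Finset.univ : Finset (Fin K))) (t := fun i => Finset.Ioi i)
      (f := fun i j => x (Fin.rev j) - x (Fin.rev i)),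
    Finset.prod_sigma' (s := (Finset.univ : Finset (Fin K))) (t := fun i => Finset.Ioi i)
      (f := fun i j => x i - x j)]
  apply Finset.prod_nbij' (i := fun p => ⟨Fin.rev p.2, Fin.rev p.1⟩)
    (j := fun p => ⟨Fin.rev p.2, Fin.rev p.1⟩)
  · intro p hp
    rw [Finset.mem_sigma] at hp ⊢
    refine ⟨Finset.mem_univ _, ?_⟩
    rw [Finset.mem_Ioi] at hp ⊢
    exact Fin.rev_lt_rev.mpr hp.2
  · intro p hp
    rw [Finset.mem_sigma] at hp ⊢
    refine ⟨Finset.mem_univ _, ?_⟩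
    rw [Finset.mem_Ioi] at hp ⊢
    exact Fin.rev_lt_rev.mpr hp.2
  · intro p _; simp
  · intro p _; simp
  · intro p _; simp

lemma det_phi_anti {K : ℕ} (x : Fin K → ℂ) (cs : ℕ → ℂ) :
    (Matrix.of fun i j : Fin K => ∏ s ∈ Finset.range (K - 1 - (j:ℕ)), (x i - cs s)).det
      = ∏ i : Fin K, ∏ j ∈ Finset.Ioi i, (x i - x j) := by
  rw [← Matrix.det_submatrix_equiv_self Fin.revPerm
    (Matrix.of fun i j : Fin K => ∏ s ∈ Finset.range (K - 1 - (j:ℕ)), (x i - cs s))]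
  have hval : ∀ j : Fin K, K - 1 - ((Fin.rev j : Fin K) : ℕ) = (j:ℕ) := by
    intro j
    rw [Fin.val_rev]
    omega
  have : (Matrix.of fun i j : Fin K => ∏ s ∈ Finset.range (K - 1 - (j:ℕ)), (x i - cs s)).submatrix
      Fin.revPerm Fin.revPerm
      = Matrix.of fun i j : Fin K => ∏ s ∈ Finset.range (j:ℕ), (x (Fin.rev i) - cs s) := by
    ext i j
    simp only [Matrix.submatrix_apply, Matrix.of_apply, Fin.revPerm_apply]
    rw [hval]
  rw [this, det_phiMatrix (fun i => x (Fin.rev i)) cs, Matrix.det_vandermonde]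
  exact prod_Ioi_rev x


open Classical in
/-- Convert a strictly antitone tuple into a signature. -/
noncomputable def toSigP {K N : ℕ} (g : Fin K → Fin N) : SignP K :=
  if hg : StrictAnti g then
    ⟨fun r => ((g r : ℕ) : ℤ) - ((K - 1 - (r:ℕ) : ℕ) : ℤ),
     by
      intro r r' hrr'
      have h1 := strictAnti_add_antitone hg hrr'
      simp only [] at h1
      have h2 : (r:ℕ) ≤ (r':ℕ) := hrr'
      have h3 : (r':ℕ) < K := r'.isLt
      dsimp only
      omega,
     by
      intro r
      have := strictAnti_lb hg r
      dsimp only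
      omega⟩
  else ⟨0, antitone_const, fun i => le_refl 0⟩

lemma toSigP_val {K N : ℕ} {g : Fin K → Fin N} (hg : StrictAnti g) (r : Fin K) :
    (toSigP g).1 r = ((g r : ℕ) : ℤ) - ((K - 1 - (r:ℕ) : ℕ) : ℤ) := by
  simp [toSigP, hg]

lemma toSigP_toNat {K N : ℕ} {g : Fin K → Fin N} (hg : StrictAnti g) (r : Fin K) :
    ((toSigP g).1 r).toNat + (K - 1 - (r:ℕ)) = (g r : ℕ) := by
  rw [toSigP_val hg]
  have := strictAnti_lb hg r
  omega

lemma pochR_prod (x : ℝ) (n : ℕ) : pochR x n = ∏ s ∈ Finset.range n, (x + s) := by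
  induction n with
  | zero => simp [pochR]
  | succ m ih =>
    rw [Finset.prod_range_succ, ← ih, pochR, pochR, ascPochhammer_succ_right]
    simp [Polynomial.eval_mul]

lemma pochR_cast (x : ℝ) (n : ℕ) : ((pochR x n : ℝ) : ℂ) = pochC (x:ℂ) n := by
  rw [pochR_prod, pochC_prod]
  push_cast
  rfl

lemma div4 (a b c d : ℂ) : (a/b)/(c/d) = a*d/(b*c) := by
  simp only [div_eq_mul_inv, mul_inv, inv_inv]
  ring

lemma ofReal_det {n : ℕ} (M : Matrix (Fin n) (Fin n) ℝ) :
    ((M.det : ℝ) : ℂ) = (M.map (fun x => (x:ℂ))).det := by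
  have h := RingHom.map_det Complex.ofRealHom M
  simpa [Complex.ofRealHom_eq_coe, Matrix.map] using h

lemma keyalg (Aw P B W0 V0 B0 Vκ : ℂ) (hW0 : W0 ≠ 0) (hV0 : V0 ≠ 0) (hB0 : B0 ≠ 0)
    (hVκ : Vκ ≠ 0) :
    Aw * P * B / (W0 * V0 * B0 * (Vκ / V0)) = (Aw / W0) * (P / Vκ) * (B / B0) := by
  field_simp

set_option maxHeartbeats 2000000

end Aux

/-- **Expansion of `G_{κ,K}/d_K(κ;ε)` in dual Schur functions** (Lemma 4.4 of the paper):
`G_{κ,K}(t₁,…,t_K)/d_K(κ;ε) = Σ_{μ⊆κ} A_{μ,κ} σ_{μ,K}(t₁²,…,t_K² | (L+ε)², (L+ε+1)², …)`. -/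
theorem Gfun_expansion_dualSchur
    (a eps : ℝ) (ha : -1 < a) (heps : 0 ≤ eps)
    (L K : ℕ) (hL : 2 ≤ L) (hK : 1 ≤ K)
    (κ : SignP K) (t : Fin K → ℂ)
    (hpoch : ∀ (j : Fin K) (m : ℕ), (t j)^2 ≠ ((L:ℂ) + (eps:ℂ) + (m:ℂ))^2)
    (hdet1 : Matrix.det (Matrix.of fun i j : Fin K =>
        gfun a eps L (K - 1 - (i:ℕ)) (t j)) ≠ 0)
    (hdet2 : Matrix.det (Matrix.of fun j r : Fin K =>
        1 / ∏ s ∈ Finset.range (K - 1 - (r:ℕ)),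
          ((t j)^2 - (((L:ℂ) + (eps:ℂ) + (s:ℂ))^2))) ≠ 0) :
    Gfun a eps L κ.1 t / ((dfun K κ.1 eps : ℝ) : ℂ)
      = ∑ᶠ (μ : SignP K) (_ : ∀ i, μ.1 i ≤ κ.1 i),
          ((Acoef a eps L K μ.1 κ.1 : ℝ) : ℂ) *
            dualSchur μ.1 (fun j => (t j)^2) (fun s : ℕ => ((L:ℂ) + (eps:ℂ) + (s:ℂ))^2) := by
  classical
  obtain ⟨κv, κanti, κpos⟩ := κ
  simp only []
  set kv : Fin K → ℕ := fun i => (κv i).toNat + (K - 1 - (i:ℕ)) with hkv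
  set i0 : Fin K := ⟨0, hK⟩ with hi0
  set N : ℕ := kv i0 + 1 with hN
  have hkv_anti : Antitone kv := by
    intro i j hij
    have h2 : (κv j).toNat ≤ (κv i).toNat := Int.toNat_le_toNat (κanti hij)
    have h3 : (i:ℕ) ≤ (j:ℕ) := hij
    simp only [hkv]; omega
  have hkv_santi : StrictAnti kv := by
    intro i j hij
    have h2 : (κv j).toNat ≤ (κv i).toNat := Int.toNat_le_toNat (κanti (le_of_lt hij))
    have h3 : (i:ℕ) < (j:ℕ) := hij
    have h4 : (j:ℕ) < K := j.isLt
    simp only [hkv]; omega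
  have hkv_lt : ∀ i, kv i < N := by
    intro i
    have h1 : i0 ≤ i := by rw [Fin.le_def]; exact Nat.zero_le _
    have := hkv_anti h1
    omega
  have hkv_ge : ∀ i : Fin K, K - 1 - (i:ℕ) ≤ kv i := by
    intro i; simp only [hkv]; omega
  -- complex abbreviations
  set cC : ℕ → ℂ := fun s => ((L:ℂ) + (eps:ℂ) + (s:ℂ))^2 with hcC
  set yv : Fin K → ℂ := fun j => (t j)^2 with hyv
  set Bm : Matrix (Fin N) (Fin K) ℂ :=
    Matrix.of (fun n j => (∏ s ∈ Finset.range (n:ℕ), (yv j - cC s))⁻¹) with hBm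
  set Am : Matrix (Fin K) (Fin N) ℂ :=
    Matrix.of (fun i n => wC a eps L (n:ℕ) * phiC eps (n:ℕ) (kv i)) with hAm
  set Am' : Matrix (Fin K) (Fin N) ℂ :=
    Matrix.of (fun i n => wC a eps L (n:ℕ) * phiC eps (n:ℕ) (K - 1 - (i:ℕ))) with hAm'
  -- the matrices of G as products
  have hMnum : (Matrix.of fun i j : Fin K =>
      gfun a eps L ((κv i).toNat + (K - 1 - (i:ℕ))) (t j)) = Am * Bm := by
    ext i j
    rw [Matrix.mul_apply, Matrix.of_apply]
    rw [show (κv i).toNat + (K - 1 - (i:ℕ)) = kv i from rfl]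
    rw [gfun_expand a eps ha L (kv i) N (hkv_lt i) (t j) (hpoch j)]
    rw [← Fin.sum_univ_eq_sum_range (fun n =>
      wC a eps L n * phiC eps n (kv i) *
        (∏ s ∈ Finset.range n, ((t j)^2 - ((L:ℂ) + (eps:ℂ) + (s:ℂ))^2))⁻¹) N]
    apply Finset.sum_congr rfl
    intro n _
    simp only [hAm, hBm, Matrix.of_apply, hyv, hcC]
    try ring
  have hMden : (Matrix.of fun i j : Fin K =>
      gfun a eps L (K - 1 - (i:ℕ)) (t j)) = Am' * Bm := by
    ext i j
    rw [Matrix.mul_apply, Matrix.of_apply]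
    have hlt : K - 1 - (i:ℕ) < N := by have := hkv_ge i; have := hkv_lt i; omega
    rw [gfun_expand a eps ha L (K - 1 - (i:ℕ)) N hlt (t j) (hpoch j)]
    rw [← Fin.sum_univ_eq_sum_range (fun n =>
      wC a eps L n * phiC eps n (K - 1 - (i:ℕ)) *
        (∏ s ∈ Finset.range n, ((t j)^2 - ((L:ℂ) + (eps:ℂ) + (s:ℂ))^2))⁻¹) N]
    apply Finset.sum_congr rfl
    intro n _
    simp only [hAm', hBm, Matrix.of_apply, hyv, hcC]
    try ring
  set Dset : Finset (Fin K → Fin N) :=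
    Finset.univ.filter (fun g : Fin K → Fin N => StrictAnti g) with hDset
  -- notation for the pieces
  set Wg : (Fin K → Fin N) → ℂ := fun g => ∏ j, wC a eps L ((g j : ℕ)) with hWg
  set Phidet : (Fin K → Fin N) → ℂ :=
    fun g => (Matrix.of fun i j : Fin K => phiC eps ((g j : ℕ)) (kv i)).det with hPhidet
  set Bdet : (Fin K → Fin N) → ℂ :=
    fun g => (Matrix.of fun i j : Fin K => Bm (g i) j).det with hBdet
  have hcolA : ∀ g : Fin K → Fin N,
      (Matrix.of fun i j : Fin K => Am i (g j)).det = Wg g * Phidet g := by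
    intro g
    have h := Matrix.det_mul_row (fun j : Fin K => wC a eps L ((g j : ℕ)))
      (Matrix.of fun i j : Fin K => phiC eps ((g j : ℕ)) (kv i))
    exact h
  -- Cauchy-Binet for the numerator
  have hnum : (Am * Bm).det = ∑ g ∈ Dset, Wg g * Phidet g * Bdet g := by
    rw [cauchy_binet]
    apply Finset.sum_congr rfl
    intro g _
    rw [hcolA g]
    try rfl
  -- the distinguished antitone tuple
  set g0 : Fin K → Fin N := fun r => ⟨K - 1 - (r:ℕ), by have := hkv_ge r; have := hkv_lt r; omega⟩
    with hg0
  have hg0_anti : StrictAnti g0 := by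
    intro i j hij
    rw [Fin.lt_def]
    have h3 : (i:ℕ) < (j:ℕ) := hij
    have h4 : (j:ℕ) < K := j.isLt
    simp only [hg0]
    omega
  have hg0_mem : g0 ∈ Dset := by
    rw [hDset, Finset.mem_filter]
    exact ⟨Finset.mem_univ _, hg0_anti⟩
  -- vanishing of numerator terms with a too-large index
  have hvanishA : ∀ (kk : Fin K → ℕ), Antitone kk → ∀ g : Fin K → Fin N, StrictAnti g →
      ∀ r : Fin K, kk r < (g r : ℕ) →
      (Matrix.of fun i j : Fin K => wC a eps L ((g j : ℕ)) * phiC eps ((g j : ℕ)) (kk i)).det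
        = 0 := by
    intro kk hkk g hg r hr
    apply det_eq_zero_block _ r
    intro i j hri hjr
    have h1 : kk i ≤ kk r := hkk hri
    have h2 : (g r : ℕ) ≤ (g j : ℕ) := by
      rcases eq_or_lt_of_le hjr with h | h
      · rw [h]
      · exact le_of_lt (hg h)
    rw [Matrix.of_apply, phiC_eq_zero (by omega), mul_zero]
  -- denominator evaluates to a single term
  set x0C : Fin K → ℂ := fun i => ((K:ℂ) - 1 - ((i:ℕ):ℂ) + (eps:ℂ))^2 with hx0C
  set V0C : ℂ := ∏ i : Fin K, ∏ j ∈ Finset.Ioi i, (x0C i - x0C j) with hV0C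
  set W0 : ℂ := ∏ j : Fin K, wC a eps L (K - 1 - (j:ℕ)) with hW0
  have hcastK : ∀ i : Fin K, ((K - 1 - (i:ℕ) : ℕ) : ℂ) = (K:ℂ) - 1 - ((i:ℕ):ℂ) := by
    intro i
    have h1 : (i:ℕ) ≤ K - 1 := by have := i.isLt; omega
    rw [Nat.cast_sub h1, Nat.cast_sub (by omega : 1 ≤ K)]
    push_cast
    ring
  have hphi0 : ∀ (i : Fin K) (n : ℕ), phiC eps n (K - 1 - (i:ℕ))
      = ∏ s ∈ Finset.range n, (x0C i - ((eps:ℂ) + (s:ℂ))^2) := by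
    intro i n
    rw [phiC]
    apply Finset.prod_congr rfl
    intro s _
    rw [hcastK i]
    try simp only [hx0C]
    try ring_nf
  have hPhidet0 : (Matrix.of fun i j : Fin K =>
      phiC eps ((g0 j : ℕ)) (K - 1 - (i:ℕ))).det = V0C := by
    have hg0v : ∀ j : Fin K, (g0 j : ℕ) = K - 1 - (j:ℕ) := fun j => rfl
    rw [show (Matrix.of fun i j : Fin K => phiC eps ((g0 j : ℕ)) (K - 1 - (i:ℕ)))
      = Matrix.of fun i j : Fin K => ∏ s ∈ Finset.range (K - 1 - (j:ℕ)),
          (x0C i - ((eps:ℂ) + (s:ℂ))^2) from by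
        ext i j
        rw [Matrix.of_apply, Matrix.of_apply, hg0v j, hphi0 i]]
    rw [det_phi_anti x0C (fun s => ((eps:ℂ) + (s:ℂ))^2)]
  have hden_eq : (Am' * Bm).det = W0 * V0C * Bdet g0 := by
    rw [cauchy_binet]
    rw [Finset.sum_eq_single_of_mem g0 (by
      rw [Finset.mem_filter]; exact ⟨Finset.mem_univ _, hg0_anti⟩)]
    · have hA' : (Matrix.of fun i j : Fin K => Am' i (g0 j)).det
          = W0 * V0C := by
        have h := Matrix.det_mul_row (fun j : Fin K => wC a eps L ((g0 j : ℕ)))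
          (Matrix.of fun i j : Fin K => phiC eps ((g0 j : ℕ)) (K - 1 - (i:ℕ)))
        rw [hPhidet0] at h
        have h2 : (∏ j : Fin K, wC a eps L ((g0 j : ℕ))) = W0 :=
          Finset.prod_congr rfl (fun j _ => rfl)
        rw [h2] at h
        exact h
      rw [hA']
      try rfl
    · intro g hgmem hgne
      rw [Finset.mem_filter] at hgmem
      have hg : StrictAnti g := hgmem.2
      have hex : ∃ r : Fin K, K - 1 - (r:ℕ) < (g r : ℕ) := by
        by_contra hc
        push_neg at hc
        apply hgne
        funext r
        have h1 := strictAnti_lb hg r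
        have h2 := hc r
        apply Fin.ext
        have : (g r : ℕ) = K - 1 - (r:ℕ) := le_antisymm h2 h1
        rw [this]
        try rfl
      obtain ⟨r, hr⟩ := hex
      have hanti' : Antitone (fun i : Fin K => K - 1 - (i:ℕ)) := by
        intro i j hij
        have : (i:ℕ) ≤ (j:ℕ) := hij
        dsimp only
        omega
      rw [show (Matrix.of fun i j : Fin K => Am' i (g j))
        = Matrix.of (fun i j : Fin K => wC a eps L ((g j : ℕ)) *
            phiC eps ((g j : ℕ)) (K - 1 - (i:ℕ))) from rfl]
      rw [hvanishA _ hanti' g hg r hr]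
      ring
  -- nonvanishing facts
  have hmm0 : (Matrix.of fun i j : Fin K => Bm (g0 i) j)
      = (Matrix.of fun j r : Fin K =>
        1 / ∏ s ∈ Finset.range (K - 1 - (r:ℕ)),
          ((t j)^2 - (((L:ℂ) + (eps:ℂ) + (s:ℂ))^2))).transpose := by
    ext i j
    simp only [Matrix.transpose_apply, Matrix.of_apply, one_div]
    rfl
  have hB0 : Bdet g0 ≠ 0 := by
    have heq : Bdet g0 = (Matrix.of fun j r : Fin K =>
        1 / ∏ s ∈ Finset.range (K - 1 - (r:ℕ)),
          ((t j)^2 - (((L:ℂ) + (eps:ℂ) + (s:ℂ))^2))).det := by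
      rw [show Bdet g0 = (Matrix.of fun i j : Fin K => Bm (g0 i) j).det from rfl,
        hmm0, Matrix.det_transpose]
    rw [heq]
    exact hdet2
  have hdenne : (Am' * Bm).det ≠ 0 := by rw [← hMden]; exact hdet1
  have hW0V0 : W0 * V0C * Bdet g0 ≠ 0 := by rw [← hden_eq]; exact hdenne
  have hW0ne : W0 ≠ 0 := fun h => hW0V0 (by rw [h]; ring)
  have hV0ne : V0C ≠ 0 := fun h => hW0V0 (by rw [h]; ring)
  -- the κ-Vandermonde
  set xκC : Fin K → ℂ := fun i => ((κv i : ℂ) + (K:ℂ) - 1 - ((i:ℕ):ℂ) + (eps:ℂ))^2 with hxκC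
  set VκC : ℂ := ∏ i : Fin K, ∏ j ∈ Finset.Ioi i, (xκC i - xκC j) with hVκC
  have hcastκ : ∀ i : Fin K, ((kv i : ℕ) : ℂ) = (κv i : ℂ) + (K:ℂ) - 1 - ((i:ℕ):ℂ) := by
    intro i
    rw [show ((kv i : ℕ) : ℂ) = ((κv i).toNat : ℂ) + ((K - 1 - (i:ℕ) : ℕ) : ℂ) from by
      simp only [hkv]; push_cast; ring]
    rw [hcastK i]
    have h1 : (((κv i).toNat : ℤ) : ℂ) = ((κv i).toNat : ℂ) := by push_cast; ring
    rw [← h1, Int.toNat_of_nonneg (κpos i)]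
    ring
  have hcastκR : ∀ i : Fin K, ((kv i : ℕ) : ℝ) = (κv i : ℝ) + (K:ℝ) - 1 - ((i:ℕ):ℝ) := by
    intro i
    have := hcastκ i
    have h2 : (((kv i : ℕ) : ℝ) : ℂ) = (((κv i : ℝ) + (K:ℝ) - 1 - ((i:ℕ):ℝ) : ℝ) : ℂ) := by
      push_cast at this ⊢
      exact this
    exact_mod_cast h2
  have hsqne : ∀ u v : ℝ, 0 ≤ v → v < u → (u:ℂ)^2 - (v:ℂ)^2 ≠ 0 := by
    intro u v hv huv
    have : ((u:ℂ))^2 - ((v:ℂ))^2 = ((u^2 - v^2 : ℝ) : ℂ) := by push_cast; ring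
    rw [this, Complex.ofReal_ne_zero]
    nlinarith
  have hVκne : VκC ≠ 0 := by
    rw [hVκC]
    apply Finset.prod_ne_zero_iff.mpr
    intro i _
    apply Finset.prod_ne_zero_iff.mpr
    intro j hj
    rw [Finset.mem_Ioi] at hj
    have hij : i < j := hj
    have h1 : kv j < kv i := hkv_santi hij
    have hxi : xκC i = ((((kv i : ℕ) : ℝ) + eps : ℝ) : ℂ)^2 := by
      simp only [hxκC]
      rw [show ((((kv i : ℕ) : ℝ) + eps : ℝ) : ℂ) = ((kv i : ℕ) : ℂ) + (eps:ℂ) from by push_cast; ring]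
      rw [hcastκ i]
    have hxj : xκC j = ((((kv j : ℕ) : ℝ) + eps : ℝ) : ℂ)^2 := by
      simp only [hxκC]
      rw [show ((((kv j : ℕ) : ℝ) + eps : ℝ) : ℂ) = ((kv j : ℕ) : ℂ) + (eps:ℂ) from by push_cast; ring]
      rw [hcastκ j]
    rw [hxi, hxj]
    apply hsqne
    · positivity
    · have : ((kv j : ℕ) : ℝ) < ((kv i : ℕ) : ℝ) := by exact_mod_cast h1
      linarith
  -- dfun cast
  have hdfun : ((dfun K κv eps : ℝ) : ℂ) = VκC / V0C := by
    rw [dfun, Complex.ofReal_prod]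
    rw [show (∏ i : Fin K, ((∏ j ∈ Finset.Ioi i,
        (((κv i : ℝ) + (K:ℝ) - 1 - ((i:ℕ):ℝ) + eps)^2 - ((κv j : ℝ) + (K:ℝ) - 1 - ((j:ℕ):ℝ) + eps)^2) /
        (((K:ℝ) - 1 - ((i:ℕ):ℝ) + eps)^2 - ((K:ℝ) - 1 - ((j:ℕ):ℝ) + eps)^2) : ℝ) : ℂ))
      = ∏ i : Fin K, ∏ j ∈ Finset.Ioi i, ((xκC i - xκC j) / (x0C i - x0C j)) from by
        apply Finset.prod_congr rfl
        intro i _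
        rw [Complex.ofReal_prod]
        apply Finset.prod_congr rfl
        intro j _
        push_cast
        try simp only [hxκC, hx0C]
        try ring]
    rw [show (∏ i : Fin K, ∏ j ∈ Finset.Ioi i, ((xκC i - xκC j) / (x0C i - x0C j)))
      = ∏ i : Fin K, ((∏ j ∈ Finset.Ioi i, (xκC i - xκC j)) / ∏ j ∈ Finset.Ioi i, (x0C i - x0C j))
      from Finset.prod_congr rfl (fun i _ => Finset.prod_div_distrib _ _)]
    rw [Finset.prod_div_distrib]
    try rfl
  -- ========== right-hand side restructuring ==========
  set f : SignP K → ℂ := fun μ => ((Acoef a eps L K μ.1 κv : ℝ) : ℂ) *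
    dualSchur μ.1 (fun j => (t j)^2) (fun s : ℕ => ((L:ℂ) + (eps:ℂ) + (s:ℂ))^2) with hfdef
  have hrhs1 : ∑ᶠ (μ : SignP K) (_ : ∀ i, μ.1 i ≤ κv i), f μ
      = ∑ᶠ (μ : SignP K), (if (∀ i, μ.1 i ≤ κv i) then f μ else 0) := by
    apply finsum_congr
    intro μ
    exact finsum_eq_if
  set F : SignP K → ℂ := fun μ => if (∀ i, μ.1 i ≤ κv i) then f μ else 0 with hF
  set cond' : (Fin K → Fin N) → Prop := fun g => ∀ r : Fin K, (g r : ℕ) ≤ kv r with hcond'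
  set Dc : Finset (Fin K → Fin N) := Dset.filter cond' with hDc
  set S : Finset (SignP K) := Dc.image toSigP with hS
  have hsupp : Function.support F ⊆ ↑S := by
    intro μ hμ
    have hcond : ∀ i, μ.1 i ≤ κv i := by
      by_contra hc
      apply hμ
      simp only [hF, if_neg hc]
    have hglt : ∀ r : Fin K, (μ.1 r).toNat + (K - 1 - (r:ℕ)) < N := by
      intro r
      have h1 : (μ.1 r).toNat ≤ (κv r).toNat := Int.toNat_le_toNat (hcond r)
      have h2 := hkv_lt r
      simp only [hkv] at h2
      omega
    set g : Fin K → Fin N := fun r => ⟨(μ.1 r).toNat + (K - 1 - (r:ℕ)), hglt r⟩ with hgdef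
    have hganti : StrictAnti g := by
      intro r r' hrr'
      rw [Fin.lt_def]
      have h1 : μ.1 r' ≤ μ.1 r := μ.2.1 (le_of_lt hrr')
      have h2 := Int.toNat_le_toNat h1
      have h3 : (r:ℕ) < (r':ℕ) := hrr'
      have h4 : (r':ℕ) < K := r'.isLt
      simp only [hgdef]
      omega
    have hμg : toSigP g = μ := by
      apply Subtype.ext
      funext r
      rw [toSigP_val hganti r]
      have h5 := μ.2.2 r
      have h6 := Int.toNat_of_nonneg h5
      simp only [hgdef]
      have h7 : (r : ℕ) < K := r.isLt
      push_cast
      omega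
    rw [Finset.mem_coe, hS, ← hμg]
    apply Finset.mem_image_of_mem
    rw [hDc, Finset.mem_filter, hDset, Finset.mem_filter]
    refine ⟨⟨Finset.mem_univ _, hganti⟩, ?_⟩
    intro r
    have h1 : (μ.1 r).toNat ≤ (κv r).toNat := Int.toNat_le_toNat (hcond r)
    simp only [hgdef, hkv, hcond']
    omega
  have hrhs2 : ∑ᶠ (μ : SignP K), F μ = ∑ μ ∈ S, F μ :=
    finsum_eq_sum_of_support_subset F hsupp
  have hinj : Set.InjOn toSigP (↑Dc : Set (Fin K → Fin N)) := by
    intro g hg g' hg' hEq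
    rw [Finset.mem_coe, hDc, Finset.mem_filter, hDset, Finset.mem_filter] at hg hg'
    have hga : StrictAnti g := hg.1.2
    have hga' : StrictAnti g' := hg'.1.2
    funext r
    have h1 : (toSigP g).1 r = (toSigP g').1 r := by rw [hEq]
    rw [toSigP_val hga r, toSigP_val hga' r] at h1
    apply Fin.ext
    omega
  have hrhs3 : ∑ μ ∈ S, F μ = ∑ g ∈ Dc, F (toSigP g) := by
    rw [hS]
    exact Finset.sum_image fun g hg g' hg' hEq =>
      hinj (Finset.mem_coe.mpr hg) (Finset.mem_coe.mpr hg') hEq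
  have hcond_iff : ∀ g ∈ Dset, (cond' g ↔ ∀ i, (toSigP g).1 i ≤ κv i) := by
    intro g hgmem
    rw [hDset, Finset.mem_filter] at hgmem
    have hga : StrictAnti g := hgmem.2
    constructor
    · intro hc i
      rw [toSigP_val hga i]
      have h1 := hc i
      have h2 := Int.toNat_of_nonneg (κpos i)
      simp only [hkv] at h1
      omega
    · intro hc r
      have h1 := hc r
      rw [toSigP_val hga r] at h1
      have h2 := Int.toNat_of_nonneg (κpos r)
      have h3 := strictAnti_lb hga r
      simp only [hkv, hcond']
      omega
  have hrhs4 : ∑ g ∈ Dc, F (toSigP g)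
      = ∑ g ∈ Dset, (if cond' g then f (toSigP g) else 0) := by
    rw [hDc, Finset.sum_filter]
    apply Finset.sum_congr rfl
    intro g hg
    by_cases hc : cond' g
    · rw [if_pos hc, if_pos hc]
      simp only [hF]
      rw [if_pos ((hcond_iff g hg).mp hc)]
    · rw [if_neg hc, if_neg hc]
  -- ========== assembling ==========
  rw [hrhs1, hrhs2, hrhs3, hrhs4]
  rw [Gfun, hMnum, hMden, hnum, hden_eq, hdfun]
  rw [div_div]
  rw [Finset.sum_div]
  apply Finset.sum_congr rfl
  intro g hgmem
  have hga : StrictAnti g := by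
    rw [hDset, Finset.mem_filter] at hgmem
    exact hgmem.2
  by_cases hc : cond' g
  · rw [if_pos hc]
    -- the per-term identity
    have hmmN : (Matrix.of fun j r : Fin K =>
        1 / ∏ s ∈ Finset.range (((toSigP g).1 r).toNat + (K - 1 - (r:ℕ))),
          ((t j)^2 - ((L:ℂ) + (eps:ℂ) + (s:ℂ))^2))
        = (Matrix.of fun i j : Fin K => Bm (g i) j).transpose := by
      ext j r
      simp only [Matrix.transpose_apply, Matrix.of_apply, one_div]
      rw [toSigP_toNat hga r]
      rfl
    have hdetQ0 : (Matrix.of fun j r : Fin K =>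
        1 / ∏ s ∈ Finset.range (K - 1 - (r:ℕ)),
          ((t j)^2 - ((L:ℂ) + (eps:ℂ) + (s:ℂ))^2)).det = Bdet g0 := by
      rw [← Matrix.det_transpose, ← hmm0]
      try rfl
    have hdS : dualSchur (toSigP g).1 (fun j => (t j)^2)
        (fun s : ℕ => ((L:ℂ) + (eps:ℂ) + (s:ℂ))^2) = Bdet g / Bdet g0 := by
      simp only [dualSchur]
      rw [hmmN, Matrix.det_transpose, hdetQ0]
      try rfl
    have hAc : ((Acoef a eps L K (toSigP g).1 κv : ℝ) : ℂ)
        = (Wg g / W0) * (Phidet g / VκC) := by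
      rw [Acoef, Complex.ofReal_mul]
      congr 1
      · -- Pochhammer ratio part
        rw [Complex.ofReal_prod]
        rw [show Wg g / W0 = ∏ i : Fin K,
            (wC a eps L ((g i : ℕ)) / wC a eps L (K - 1 - (i:ℕ))) from by
          rw [Finset.prod_div_distrib]; try rfl]
        apply Finset.prod_congr rfl
        intro i _
        rw [toSigP_toNat hga i]
        push_cast [pochR_cast]
        rw [wC, wC, div4]
        push_cast
        congr 1 <;> ring
      · -- multiSchur part
        rw [multiSchur]
        rw [Complex.ofReal_div]
        congr 1
        · rw [ofReal_det]
          rw [show Phidet g = (Matrix.of fun i j : Fin K =>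
              phiC eps ((g j : ℕ)) (kv i)).det from rfl]
          congr 1
          ext i r
          simp only [Matrix.map_apply, Matrix.of_apply]
          rw [toSigP_toNat hga r, mfact]
          rw [Complex.ofReal_prod]
          rw [phiC]
          apply Finset.prod_congr rfl
          intro s _
          push_cast
          rw [show ((kv i : ℕ) : ℂ) = (κv i : ℂ) + (K:ℂ) - 1 - ((i:ℕ):ℂ) from hcastκ i]
          try ring
        · rw [vmonde, Complex.ofReal_prod, hVκC]
          apply Finset.prod_congr rfl
          intro i _
          rw [Complex.ofReal_prod]
          apply Finset.prod_congr rfl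
          intro j _
          push_cast
          try simp only [hxκC]
          try ring
    simp only [hfdef]
    rw [hAc, hdS]
    exact keyalg _ _ _ _ _ _ _ hW0ne hV0ne hB0 hVκne
  · rw [if_neg hc]
    have hex : ∃ r : Fin K, kv r < (g r : ℕ) := by
      by_contra hcc
      push_neg at hcc
      exact hc hcc
    obtain ⟨r, hr⟩ := hex
    have hzero : Phidet g = 0 := by
      rw [hPhidet]
      apply det_eq_zero_block _ r
      intro i j hri hjr
      have h1 : kv i ≤ kv r := hkv_anti hri
      have h2 : (g r : ℕ) ≤ (g j : ℕ) := by
        rcases eq_or_lt_of_le hjr with h | h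
        · rw [h]
        · exact le_of_lt (hga h)
      rw [Matrix.of_apply, phiC_eq_zero (by omega)]
    rw [hzero]
    ring
end

section
/- Let ε ≥ 0 be real, L ≥ 2 an integer, and m ≥ 1 an integer. Then for every complex t with t² ≠ (L+ε+j−1)² for j = 1,…,m: e_m(t) = Σ_{ℓ=1}^{m} 2·(−1)^{ℓ}·(L+ε+m−1)·[∏_{j=1}^{ℓ−1} (2L+2ε+m+j−2)(m−j)]·f_ℓ(t). In particular, in the (unique) expansion of e_m in the functions f_0 ≡ 1, f_1, f_2, …, the coefficient of f_0 is zero and the coefficient of f_ℓ (1 ≤ ℓ ≤ m) equals 2(−1)^{ℓ}(L+ε+m−1)·∏_{j=1}^{ℓ−1}(2L+2ε+m+j−2)(m−j). -/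
open Finset

/-- `f_ℓ(t) = 1/((−t+L+ε)_ℓ (t+L+ε)_ℓ)`. -/
noncomputable def ffun (eps : ℝ) (L : ℕ) (l : ℕ) (t : ℂ) : ℂ :=
  1 / (pochC (-t + (L:ℂ) + (eps:ℂ)) l * pochC (t + (L:ℂ) + (eps:ℂ)) l)

lemma pochC_eq_prod (x : ℂ) (n : ℕ) : pochC x n = ∏ k ∈ range n, (x + k) := by
  induction n with
  | zero => simp [pochC]
  | succ n ih => rw [pochC, ascPochhammer_succ_eval, ← pochC, ih, prod_range_succ]

lemma ffun_eq (eps : ℝ) (L : ℕ) (l : ℕ) (t : ℂ) :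
    ffun eps L l t = 1 / ∏ k ∈ range l, (((L:ℂ) + (eps:ℂ) + (k:ℂ))^2 - t^2) := by
  unfold ffun
  rw [pochC_eq_prod, pochC_eq_prod, ← Finset.prod_mul_distrib]
  congr 1
  refine Finset.prod_congr rfl fun k _ => ?_
  ring

/-- Abstract telescoping identity. -/
lemma telescope_key (A : ℂ) (B : ℕ → ℂ) (t : ℂ) (m : ℕ)
    (hD : t^2 - A^2 ≠ 0)
    (hBt : ∀ k, k < m → (B k)^2 - t^2 ≠ 0)
    (hm : 1 ≤ m) (hAB : B (m-1) = A) :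
    2*A/(t^2-A^2) = ∑ i ∈ range m,
      (-(2*A * ∏ k ∈ range i, ((B k)^2 - A^2))) *
        (1/∏ k ∈ range (i+1), ((B k)^2 - t^2)) := by
  set G : ℕ → ℂ := fun n =>
    2*A * (∏ k ∈ range n, ((B k)^2 - A^2)) /
      ((t^2 - A^2) * ∏ k ∈ range n, ((B k)^2 - t^2)) with hG
  have hQ : ∀ n, n ≤ m → (∏ k ∈ range n, ((B k)^2 - t^2)) ≠ 0 := fun n hn =>
    Finset.prod_ne_zero_iff.mpr fun k hk => hBt k (lt_of_lt_of_le (mem_range.mp hk) hn)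
  have hstep : ∀ i ∈ range m,
      (-(2*A * ∏ k ∈ range i, ((B k)^2 - A^2))) *
        (1/∏ k ∈ range (i+1), ((B k)^2 - t^2)) = G i - G (i+1) := by
    intro i hi
    have hi' := mem_range.mp hi
    have hq : (∏ k ∈ range i, ((B k)^2 - t^2)) ≠ 0 := hQ i (le_of_lt hi')
    have hb : (B i)^2 - t^2 ≠ 0 := hBt i hi'
    simp only [hG, prod_range_succ]
    field_simp
    ring
  rw [Finset.sum_congr rfl hstep, Finset.sum_range_sub' G m]
  have hGm : G m = 0 := by
    have : (∏ k ∈ range m, ((B k)^2 - A^2)) = 0 := by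
      apply Finset.prod_eq_zero (Finset.mem_range.mpr (Nat.sub_lt hm one_pos))
      rw [hAB]; ring
    simp [hG, this]
  rw [hGm, sub_zero]
  simp [hG]

/-- **Expansion of `e_m` in the functions `f_ℓ`** (Lemma 5.3 of the paper):
`e_m(t) = Σ_{ℓ=1}^{m} 2(−1)^ℓ (L+ε+m−1) [∏_{j=1}^{ℓ−1} (2L+2ε+m+j−2)(m−j)] f_ℓ(t)`;
in particular the coefficient of `f₀` vanishes. -/
theorem efun_expansion_ffun (eps : ℝ) (heps : 0 ≤ eps) (L m : ℕ) (hL : 2 ≤ L) (hm : 1 ≤ m)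
    (t : ℂ) (ht : ∀ j : ℕ, 1 ≤ j → j ≤ m → t^2 ≠ ((L:ℂ) + (eps:ℂ) + (j:ℂ) - 1)^2) :
    efun eps L m t
      = ∑ l ∈ Finset.Icc 1 m,
          2 * (-1)^l * ((L:ℂ) + (eps:ℂ) + (m:ℂ) - 1) *
            (∏ j ∈ Finset.Icc 1 (l - 1),
              ((2*(L:ℂ) + 2*(eps:ℂ) + (m:ℂ) + (j:ℂ) - 2) * ((m:ℂ) - (j:ℂ)))) *
            ffun eps L l t := by
  set A : ℂ := (L:ℂ) + (eps:ℂ) + (m:ℂ) - 1 with hA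
  set B : ℕ → ℂ := fun k => (L:ℂ) + (eps:ℂ) + (k:ℂ) with hB
  clear_value A B
  have hD : t^2 - A^2 ≠ 0 := by
    rw [hA]
    exact sub_ne_zero.mpr (ht m hm le_rfl)
  have hBt : ∀ k, k < m → (B k)^2 - t^2 ≠ 0 := by
    intro k hk h
    apply ht (k+1) (by omega) (by omega)
    have h2 : t^2 = (B k)^2 := (sub_eq_zero.mp h).symm
    rw [h2]
    simp only [hB]
    push_cast
    ring
  have hAB : B (m-1) = A := by
    simp only [hB, hA]
    have : ((m - 1 : ℕ) : ℂ) = (m : ℂ) - 1 := by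
      have := Nat.cast_sub (R := ℂ) hm
      simpa using this
    rw [this]
    ring
  -- e_m = 2A/(t²−A²)
  have hefun : efun eps L m t = 2*A/(t^2 - A^2) := by
    rw [efun, if_neg (by omega), ← hA]
    have h1 : t - A ≠ 0 := by
      intro h
      apply hD
      rw [sub_eq_zero.mp h]; ring
    have h2 : t + A ≠ 0 := by
      intro h
      apply hD
      have : t = -A := by linear_combination h
      rw [this]; ring
    field_simp
    ring
  -- rewrite the sum over Icc 1 m as a sum over range m
  have hsum : ∑ l ∈ Finset.Icc 1 m,
          2 * (-1:ℂ)^l * A *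
            (∏ j ∈ Finset.Icc 1 (l - 1),
              ((2*(L:ℂ) + 2*(eps:ℂ) + (m:ℂ) + (j:ℂ) - 2) * ((m:ℂ) - (j:ℂ)))) *
            ffun eps L l t
      = ∑ i ∈ range m,
          (-(2*A * ∏ k ∈ range i, ((B k)^2 - A^2))) *
            (1/∏ k ∈ range (i+1), ((B k)^2 - t^2)) := by
    rw [← Finset.Ico_add_one_right_eq_Icc, Finset.sum_Ico_eq_sum_range]
    refine Finset.sum_congr rfl fun i _ => ?_
    have hff : ffun eps L (1 + i) t = 1/∏ k ∈ range (i+1), ((B k)^2 - t^2) := by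
      rw [ffun_eq, Nat.add_comm 1 i]
      simp only [hB]
    have h2 : (-1:ℂ)^i * ∏ k ∈ range i, ((B k)^2 - A^2)
        = ∏ k ∈ range i, ((2*(L:ℂ) + 2*(eps:ℂ) + (m:ℂ) + ((1+k : ℕ):ℂ) - 2)
            * ((m:ℂ) - ((1+k:ℕ):ℂ))) := by
      have hc : (-1:ℂ)^i = ∏ _k ∈ range i, (-1:ℂ) := by simp
      rw [hc, ← Finset.prod_mul_distrib]
      refine Finset.prod_congr rfl fun k _ => ?_
      simp only [hB, hA]
      push_cast
      ring
    have hprod : (∏ j ∈ Finset.Icc 1 (1 + i - 1),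
              ((2*(L:ℂ) + 2*(eps:ℂ) + (m:ℂ) + (j:ℂ) - 2) * ((m:ℂ) - (j:ℂ))))
        = (-1:ℂ)^i * ∏ k ∈ range i, ((B k)^2 - A^2) := by
      rw [h2, show 1 + i - 1 = i from by omega, ← Finset.Ico_add_one_right_eq_Icc,
        Finset.prod_Ico_eq_prod_range, Nat.add_sub_cancel]
    rw [hff, hprod]
    have hsign : (-1:ℂ)^(1+i) = -((-1:ℂ)^i) := by
      rw [pow_add]; ring
    rw [hsign]
    generalize (∏ k ∈ range i, ((B k)^2 - A^2)) = P
    generalize (∏ k ∈ range (i+1), ((B k)^2 - t^2)) = Q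
    have hsq : ((-1:ℂ))^i * ((-1:ℂ))^i = 1 := by
      rw [← pow_add, ← two_mul, pow_mul]
      norm_num
    linear_combination (-(2*A*P*(1/Q))) * hsq
  rw [hefun, hsum]
  exact telescope_key A B t m hD hBt hm hAB
end

section
/- Let p ∈ ℕ and set A := −2p (an even nonpositive integer). Let B, D, E ∈ ℂ be such that ((A+B+1)/2)_{2p} ≠ 0 and (E)_{2p} ≠ 0. Then Σ_{n=0}^{2p} [(A)_n (B)_n (D)_n] / [((A+B+1)/2)_n (E)_n · n!] = Σ_{n=0}^{p} [(A/2)_n (B/2)_n (E−D)_n (D)_n] / [((A+B+1)/2)_n (E/2)_n ((E+1)/2)_n · n!]; that is, the terminating ₃F₂[A, B, D; (A+B+1)/2, E | 1] equals the terminating ₄F₃[A/2, B/2, E−D, D; (A+B+1)/2, E/2, (E+1)/2 | 1]. -/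
open Finset

lemma pochC_zero (x : ℂ) : pochC x 0 = 1 := by simp [pochC]

lemma pochC_one (x : ℂ) : pochC x 1 = x := by simp [pochC]

lemma pochC_succ (x : ℂ) (n : ℕ) : pochC x (n + 1) = pochC x n * (x + n) :=
  ascPochhammer_succ_eval n x

lemma pochC_succ_left (x : ℂ) (n : ℕ) : pochC x (n + 1) = x * pochC (x + 1) n := by
  unfold pochC
  rw [ascPochhammer_succ_left]
  simp [Polynomial.eval_comp]

lemma pochC_add (x : ℂ) (m n : ℕ) : pochC x (m + n) = pochC x m * pochC (x + m) n := by
  unfold pochC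
  rw [← ascPochhammer_mul, Polynomial.eval_mul, Polynomial.eval_comp]
  simp

lemma pochC_reflect (x : ℂ) (n : ℕ) : pochC x n = (-1) ^ n * pochC (1 - x - n) n := by
  induction n generalizing x with
  | zero => simp [pochC_zero]
  | succ n ih =>
    rw [pochC_succ, ih, pochC_succ_left]
    have : (1 : ℂ) - x - (n + 1 : ℕ) + 1 = 1 - x - n := by push_cast; ring
    rw [this]
    push_cast
    ring

lemma pochC_dup (x : ℂ) (k : ℕ) :
    pochC x (2 * k) = 4 ^ k * pochC (x / 2) k * pochC ((x + 1) / 2) k := by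
  induction k with
  | zero => simp [pochC_zero]
  | succ k ih =>
    have h2 : 2 * (k + 1) = 2 * k + 1 + 1 := by ring
    rw [h2, pochC_succ, pochC_succ, ih, pochC_succ, pochC_succ]
    push_cast
    ring

lemma pochC_ne_zero_of_le {x : ℂ} {N : ℕ} (h : pochC x N ≠ 0) {k : ℕ} (hk : k ≤ N) :
    pochC x k ≠ 0 := by
  intro h0
  apply h
  obtain ⟨t, rfl⟩ := Nat.exists_eq_add_of_le hk
  rw [pochC_add, h0, zero_mul]

lemma pochC_neg_nat_zero (s k : ℕ) (h : s < k) : pochC (-(s : ℂ)) k = 0 := by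
  have h1 : pochC (-(s : ℂ)) (s + 1) = 0 := by
    rw [pochC_succ]
    simp
  obtain ⟨t, rfl⟩ := Nat.exists_eq_add_of_le h
  rw [pochC_add, h1, zero_mul]

lemma pochC_nat_factorial (r n : ℕ) : (Nat.factorial r : ℂ) * pochC ((r : ℂ) + 1) n = (Nat.factorial (r + n) : ℂ) :=
  factorial_mul_ascPochhammer ℂ r n

lemma pochC_neg_nat (s j : ℕ) (h : j ≤ s) :
    pochC (-(s : ℂ)) j = (-1) ^ j * (Nat.choose s j : ℂ) * (Nat.factorial j : ℂ) := by
  rw [pochC_reflect]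
  have h1 : (1 : ℂ) - (-(s : ℂ)) - j = ((s - j : ℕ) : ℂ) + 1 := by
    push_cast [h]; ring
  rw [h1]
  have h2 := pochC_nat_factorial (s - j) j
  have h3 : s - j + j = s := by omega
  rw [h3] at h2
  have h4 : ((Nat.factorial (s - j)) : ℂ) ≠ 0 := Nat.cast_ne_zero.2 (Nat.factorial_ne_zero _)
  have h5 : (Nat.choose s j : ℂ) * (Nat.factorial j : ℂ) * (Nat.factorial (s-j) : ℂ) = (Nat.factorial s : ℂ) := by
    rw_mod_cast [Nat.choose_mul_factorial_mul_factorial h]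
  have h6 : pochC (((s - j : ℕ) : ℂ)) j = 0 ∨ True := Or.inr trivial
  have h7 : pochC (((s - j : ℕ) : ℂ) + 1) j = (Nat.factorial s : ℂ) / (Nat.factorial (s-j) : ℂ) := by
    rw [eq_div_iff h4]
    linear_combination h2
  have h8 : (Nat.choose s j : ℂ) * (Nat.factorial j : ℂ) = (Nat.factorial s : ℂ) / (Nat.factorial (s-j) : ℂ) := by
    rw [eq_div_iff h4]
    linear_combination h5
  rw [h7, mul_assoc, h8]

lemma CV : ∀ (m : ℕ) (b c : ℂ), ∑ i ∈ Finset.range (m+1),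
    (-1:ℂ)^i * (Nat.choose m i : ℂ) * pochC b i * pochC (c + i) (m - i)
    = pochC (c - b) m := by
  intro m
  induction m with
  | zero => intro b c; simp [pochC_zero]
  | succ m ih =>
    intro b c
    set f : ℕ → ℂ := fun i => (-1:ℂ)^i * (Nat.choose (m+1) i : ℂ) * pochC b i * pochC (c + i) (m + 1 - i) with hf
    set g : ℕ → ℂ := fun i => (-1:ℂ)^i * (Nat.choose m i : ℂ) * pochC b i * pochC (c + i) (m + 1 - i) with hg
    set aterm : ℕ → ℂ := fun j => (-1:ℂ)^(j+1) * (Nat.choose m j : ℂ) * pochC b (j+1) * pochC (c + ((j:ℂ)+1)) (m - j) with ha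
    have step1 : ∑ i ∈ Finset.range (m+2), f i
        = ∑ j ∈ Finset.range (m+1), f (j+1) + f 0 := Finset.sum_range_succ' f (m+1)
    have step2 : ∀ j ∈ Finset.range (m+1), f (j+1) = g (j+1) + aterm j := by
      intro j hj
      simp only [hf, hg, ha, Nat.choose_succ_succ, Nat.succ_sub_succ]
      push_cast
      ring
    have step4 : f 0 = g 0 := by simp [hf, hg]
    have step5 : ∑ i ∈ Finset.range (m+2), g i = ∑ i ∈ Finset.range (m+1), g i := by
      rw [Finset.sum_range_succ]
      have : Nat.choose m (m+1) = 0 := Nat.choose_eq_zero_of_lt (by omega)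
      simp [hg, this]
    have step6 : ∀ i ∈ Finset.range (m+1), g i + aterm i
        = (c - b) * ((-1:ℂ)^i * (Nat.choose m i : ℂ) * pochC b i * pochC ((c+1) + i) (m - i)) := by
      intro i hi
      simp only [Finset.mem_range] at hi
      have hlen : m + 1 - i = (m - i) + 1 := by omega
      have e1 : pochC (c + (i:ℂ)) (m + 1 - i) = (c + i) * pochC ((c+1) + i) (m - i) := by
        rw [hlen, pochC_succ_left, show (c + (i:ℂ)) + 1 = (c+1) + i from by ring]
      have e2 : pochC b (i+1) = pochC b i * (b + i) := pochC_succ b i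
      have e3 : c + ((i:ℂ)+1) = (c+1) + i := by ring
      simp only [hg, ha, e1, e2, e3]
      ring
    calc ∑ i ∈ Finset.range (m+2), f i
        = ∑ j ∈ Finset.range (m+1), (g (j+1) + aterm j) + f 0 := by
          rw [step1]; congr 1; exact Finset.sum_congr rfl step2
      _ = (∑ j ∈ Finset.range (m+1), g (j+1) + g 0) + ∑ j ∈ Finset.range (m+1), aterm j := by
          rw [Finset.sum_add_distrib, step4]; ring
      _ = ∑ i ∈ Finset.range (m+2), g i + ∑ j ∈ Finset.range (m+1), aterm j := by
          rw [Finset.sum_range_succ' g (m+1)]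
      _ = ∑ i ∈ Finset.range (m+1), (g i + aterm i) := by
          rw [step5, Finset.sum_add_distrib]
      _ = ∑ i ∈ Finset.range (m+1), (c - b) * ((-1:ℂ)^i * (Nat.choose m i : ℂ) * pochC b i * pochC ((c+1) + i) (m - i)) :=
          Finset.sum_congr rfl step6
      _ = (c - b) * pochC ((c+1) - b) m := by rw [← Finset.mul_sum, ih b (c+1)]
      _ = pochC (c - b) (m+1) := by
          rw [pochC_succ_left]
          have : c - b + 1 = (c + 1) - b := by ring
          rw [this]

lemma VDM : ∀ (n : ℕ) (x y : ℂ), ∑ k ∈ Finset.range (n+1),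
    (Nat.choose n k : ℂ) * pochC x k * pochC y (n - k) = pochC (x + y) n := by
  intro n
  induction n with
  | zero => intro x y; simp [pochC_zero]
  | succ n ih =>
    intro x y
    set f : ℕ → ℂ := fun k => (Nat.choose (n+1) k : ℂ) * pochC x k * pochC y (n + 1 - k) with hf
    set g : ℕ → ℂ := fun k => (Nat.choose n k : ℂ) * pochC x k * pochC y (n + 1 - k) with hg
    set aterm : ℕ → ℂ := fun j => (Nat.choose n j : ℂ) * pochC x (j+1) * pochC y (n - j) with ha
    have step2 : ∀ j ∈ Finset.range (n+1), f (j+1) = g (j+1) + aterm j := by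
      intro j hj
      simp only [hf, hg, ha, Nat.choose_succ_succ, Nat.succ_sub_succ]
      push_cast
      ring
    have step4 : f 0 = g 0 := by simp [hf, hg]
    have step5 : ∑ i ∈ Finset.range (n+2), g i = ∑ i ∈ Finset.range (n+1), g i := by
      rw [Finset.sum_range_succ]
      have : Nat.choose n (n+1) = 0 := Nat.choose_eq_zero_of_lt (by omega)
      simp [hg, this]
    have step6 : ∀ k ∈ Finset.range (n+1), g k + aterm k
        = (x + y + n) * ((Nat.choose n k : ℂ) * pochC x k * pochC y (n - k)) := by
      intro k hk
      simp only [Finset.mem_range] at hk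
      have hlen : n + 1 - k = (n - k) + 1 := by omega
      have hcast : ((n - k : ℕ) : ℂ) = (n : ℂ) - k := by
        push_cast [Nat.cast_sub (by omega : k ≤ n)]; ring
      simp only [hg, ha, hlen, pochC_succ, hcast]
      ring
    calc ∑ i ∈ Finset.range (n+2), f i
        = ∑ j ∈ Finset.range (n+1), (g (j+1) + aterm j) + f 0 := by
          rw [Finset.sum_range_succ' f (n+1)]; congr 1; exact Finset.sum_congr rfl step2
      _ = (∑ j ∈ Finset.range (n+1), g (j+1) + g 0) + ∑ j ∈ Finset.range (n+1), aterm j := by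
          rw [Finset.sum_add_distrib, step4]; ring
      _ = ∑ i ∈ Finset.range (n+2), g i + ∑ j ∈ Finset.range (n+1), aterm j := by
          rw [Finset.sum_range_succ' g (n+1)]
      _ = ∑ i ∈ Finset.range (n+1), (g i + aterm i) := by
          rw [step5, Finset.sum_add_distrib]
      _ = ∑ i ∈ Finset.range (n+1), (x + y + n) * ((Nat.choose n i : ℂ) * pochC x i * pochC y (n - i)) :=
          Finset.sum_congr rfl step6
      _ = (x + y + n) * pochC (x + y) n := by rw [← Finset.mul_sum, ih x y]
      _ = pochC (x + y) (n+1) := by rw [pochC_succ]; ring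

lemma tri_swap (N : ℕ) (f : ℕ → ℕ → ℂ) :
    ∑ n ∈ Finset.range N, ∑ k ∈ Finset.range (n+1), f n k
    = ∑ k ∈ Finset.range N, ∑ n ∈ Finset.Ico k N, f n k := by
  have h := Finset.sum_Ico_Ico_comm 0 N (fun k n => f n k)
  simpa [Nat.Ico_zero_eq_range] using h.symm

lemma SAAL (m : ℕ) (a b c : ℂ) :
    ∑ k ∈ Finset.range (m+1), (Nat.choose m k : ℂ) * pochC a k * pochC b k *
      pochC (c + k) (m - k) * pochC (c - a - b) (m - k)
    = pochC (c - a) m * pochC (c - b) m := by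
  set d : ℂ := c - a - b with hd
  set T : ℕ → ℕ → ℂ := fun k i =>
    ((-1:ℂ)^i * (Nat.choose k i : ℂ) * pochC (c-a) i * pochC (c + i) (k - i)) *
    ((Nat.choose m k : ℂ) * pochC b k * pochC (c + k) (m - k) * pochC d (m - k)) with hT
  have ha' : ∀ k : ℕ, pochC a k = ∑ i ∈ Finset.range (k+1),
      (-1:ℂ)^i * (Nat.choose k i : ℂ) * pochC (c-a) i * pochC (c + i) (k - i) := by
    intro k
    have h := CV k (c - a) c
    rw [show c - (c - a) = a from by ring] at h
    rw [← h]
  have step1 : ∀ k ∈ Finset.range (m+1), (Nat.choose m k : ℂ) * pochC a k * pochC b k *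
      pochC (c + k) (m - k) * pochC d (m - k) = ∑ i ∈ Finset.range (k+1), T k i := by
    intro k hk
    calc (Nat.choose m k : ℂ) * pochC a k * pochC b k * pochC (c + k) (m - k) * pochC d (m - k)
        = pochC a k * ((Nat.choose m k : ℂ) * pochC b k * pochC (c + k) (m - k) * pochC d (m - k)) := by ring
      _ = (∑ i ∈ Finset.range (k+1), (-1:ℂ)^i * (Nat.choose k i : ℂ) * pochC (c-a) i * pochC (c + i) (k - i)) *
          ((Nat.choose m k : ℂ) * pochC b k * pochC (c + k) (m - k) * pochC d (m - k)) := by rw [← ha']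
      _ = ∑ i ∈ Finset.range (k+1), T k i := by rw [Finset.sum_mul]
  have step3 : ∀ i ∈ Finset.range (m+1), ∑ k ∈ Finset.Ico i (m+1), T k i
      = pochC (c-a) m * ((-1:ℂ)^i * (Nat.choose m i : ℂ) * pochC b i * pochC (c + i) (m - i)) := by
    intro i hi
    simp only [Finset.mem_range] at hi
    have him : i ≤ m := by omega
    rw [Finset.sum_Ico_eq_sum_range, show m + 1 - i = (m - i) + 1 from by omega]
    have key : ∀ j ∈ Finset.range ((m-i)+1), T (i+j) i
        = ((-1:ℂ)^i * (Nat.choose m i : ℂ) * pochC (c-a) i * pochC b i * pochC (c + i) (m - i)) *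
          ((Nat.choose (m-i) j : ℂ) * pochC (b + i) j * pochC d ((m-i) - j)) := by
      intro j hj
      simp only [Finset.mem_range] at hj
      have hjm : j ≤ m - i := by omega
      have h1 : (Nat.choose m (i+j) : ℂ) * (Nat.choose (i+j) i : ℂ)
          = (Nat.choose m i : ℂ) * (Nat.choose (m-i) j : ℂ) := by
        have := Nat.choose_mul (n := m) (show i ≤ i+j from by omega)
        rw [show i + j - i = j from by omega] at this
        exact_mod_cast congrArg (Nat.cast : ℕ → ℂ) this
      have h2 : pochC b (i+j) = pochC b i * pochC (b + i) j := pochC_add b i j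
      have h3 : pochC (c + (i:ℂ)) (m - i) = pochC (c + i) j * pochC (c + ((i+j : ℕ):ℂ)) (m - (i+j)) := by
        rw [show m - i = j + (m - (i+j)) from by omega, pochC_add]
        push_cast
        ring_nf
      have h4 : pochC d (m - (i+j)) = pochC d ((m-i) - j) := by
        rw [show m - (i+j) = (m-i) - j from by omega]
      have h5 : (i+j) - i = j := by omega
      calc T (i+j) i
          = ((Nat.choose m (i+j) : ℂ) * (Nat.choose (i+j) i : ℂ)) *
            ((-1:ℂ)^i * pochC (c-a) i * pochC (c + (i:ℂ)) j * pochC b (i+j) *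
              pochC (c + ((i+j : ℕ):ℂ)) (m-(i+j)) * pochC d (m-(i+j))) := by
            simp only [hT, h5]; ring
        _ = ((Nat.choose m i : ℂ) * (Nat.choose (m-i) j : ℂ)) *
            ((-1:ℂ)^i * pochC (c-a) i * pochC (c + (i:ℂ)) j * pochC b (i+j) *
              pochC (c + ((i+j : ℕ):ℂ)) (m-(i+j)) * pochC d (m-(i+j))) := by rw [h1]
        _ = ((-1:ℂ)^i * (Nat.choose m i : ℂ) * pochC (c-a) i * pochC b i * pochC (c + i) (m - i)) *
            ((Nat.choose (m-i) j : ℂ) * pochC (b + i) j * pochC d ((m-i) - j)) := by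
            rw [h2, h4, h3]; ring
    rw [Finset.sum_congr rfl key, ← Finset.mul_sum]
    have hV := VDM (m-i) (b + i) d
    rw [hV, show b + (i:ℂ) + d = (c - a) + i from by rw [hd]; ring]
    have h6 : pochC (c-a) i * pochC ((c-a) + i) (m - i) = pochC (c-a) m := by
      rw [← pochC_add, show i + (m - i) = m from by omega]
    calc ((-1:ℂ)^i * (Nat.choose m i : ℂ) * pochC (c-a) i * pochC b i * pochC (c + i) (m - i)) *
          pochC ((c-a) + i) (m - i)
        = (pochC (c-a) i * pochC ((c-a) + i) (m - i)) *
          ((-1:ℂ)^i * (Nat.choose m i : ℂ) * pochC b i * pochC (c + i) (m - i)) := by ring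
      _ = pochC (c-a) m * ((-1:ℂ)^i * (Nat.choose m i : ℂ) * pochC b i * pochC (c + i) (m - i)) := by rw [h6]
  calc ∑ k ∈ Finset.range (m+1), (Nat.choose m k : ℂ) * pochC a k * pochC b k *
        pochC (c + k) (m - k) * pochC d (m - k)
      = ∑ k ∈ Finset.range (m+1), ∑ i ∈ Finset.range (k+1), T k i := Finset.sum_congr rfl step1
    _ = ∑ i ∈ Finset.range (m+1), ∑ k ∈ Finset.Ico i (m+1), T k i := tri_swap (m+1) T
    _ = ∑ i ∈ Finset.range (m+1), pochC (c-a) m *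
          ((-1:ℂ)^i * (Nat.choose m i : ℂ) * pochC b i * pochC (c + i) (m - i)) := Finset.sum_congr rfl step3
    _ = pochC (c-a) m * ∑ i ∈ Finset.range (m+1),
          (-1:ℂ)^i * (Nat.choose m i : ℂ) * pochC b i * pochC (c + i) (m - i) := by rw [← Finset.mul_sum]
    _ = pochC (c-a) m * pochC (c - b) m := by rw [CV m b c]

lemma pochC_dup2 (x : ℂ) (n : ℕ) :
    pochC x n = 2^n * pochC (x/2) (n - n/2) * pochC ((x+1)/2) (n/2) := by
  rcases Nat.even_or_odd n with ⟨m, hm⟩ | ⟨m, hm⟩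
  · subst hm
    have h1 : m + m = 2 * m := by ring
    have h2 : m + m - (m + m) / 2 = m := by omega
    have h3 : (m + m) / 2 = m := by omega
    rw [h2, h3, h1, pochC_dup]
    rw [show ((2:ℂ))^(2*m) = 4^m from by rw [pow_mul]; norm_num]
  · subst hm
    have h2 : 2 * m + 1 - (2 * m + 1) / 2 = m + 1 := by omega
    have h3 : (2 * m + 1) / 2 = m := by omega
    rw [h2, h3, pochC_succ, pochC_dup, pochC_succ]
    have h4 : ((2:ℂ))^(2*m+1) = 2 * 4^m := by
      rw [pow_succ, pow_mul]; norm_num; ring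
    rw [h4]
    push_cast
    ring

lemma star (n : ℕ) (a b : ℂ) :
    ∑ k ∈ Finset.range (n+1), pochC (a/2) k * pochC (b/2) k * (4:ℂ)^k * (-1:ℂ)^(n-k) *
      (Nat.choose k (n-k) : ℂ) * pochC ((a+b+1)/2 + k) (n-k) * pochC ((k:ℂ)+1) (n-k)
    = pochC a n * pochC b n := by
  set c' : ℂ := (a+b+1)/2 with hc'
  set m : ℕ := n / 2 with hm
  set m' : ℕ := n - n / 2 with hm'
  have hmm' : m + m' = n := by omega
  have hmle : m ≤ m' := by omega
  set ε : ℕ := n - 2*m with hεd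
  have hε01 : ε = 0 ∨ ε = 1 := by omega
  set α : ℂ := (1 - (ε:ℂ) - n)/2 with hα
  set β : ℂ := 1 - c' - n with hβ
  set γ : ℂ := 1 - a/2 - n with hγ
  set δ : ℂ := b/2 + (m':ℂ) with hδ
  have hmm'c : (m:ℂ) + (m':ℂ) = (n:ℂ) := by exact_mod_cast congrArg (Nat.cast : ℕ → ℂ) hmm'
  have hεc : (ε:ℂ) = (n:ℂ) - 2*(m:ℂ) := by
    have h0 : (ε:ℕ) + 2*m = n := by omega
    have h1 := congrArg (Nat.cast : ℕ → ℂ) h0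
    push_cast at h1
    linear_combination h1
  set f : ℕ → ℂ := fun k => pochC (a/2) k * pochC (b/2) k * (4:ℂ)^k * (-1:ℂ)^(n-k) *
      (Nat.choose k (n-k) : ℂ) * pochC (c' + k) (n-k) * pochC ((k:ℂ)+1) (n-k) with hfd
  have hrefl : ∑ k ∈ Finset.range (n+1), f k = ∑ j ∈ Finset.range (n+1), f (n - j) := by
    rw [← Finset.sum_range_reflect]
    exact Finset.sum_congr rfl (fun j hj => by rw [Nat.add_sub_cancel])
  have htrunc : ∑ j ∈ Finset.range (n+1), f (n-j) = ∑ j ∈ Finset.range (m+1), f (n-j) := by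
    symm
    apply Finset.sum_subset (Finset.range_subset_range.2 (by omega))
    intro j hj1 hj2
    simp only [Finset.mem_range] at hj1 hj2
    have hjn : j ≤ n := by omega
    have hjm : m < j := by omega
    have hch : Nat.choose (n-j) (n-(n-j)) = 0 := by
      rw [show n - (n-j) = j from by omega]
      exact Nat.choose_eq_zero_of_lt (by omega)
    simp only [hfd, hch]
    simp
  have key : ∀ j ∈ Finset.range (m+1), f (n-j)
      = (pochC (a/2) m' * pochC (b/2) m' * (4:ℂ)^n * (-1:ℂ)^m) *
        ((Nat.choose m j : ℂ) * pochC α j * pochC β j * pochC (γ + j) (m-j) *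
          pochC (γ - α - β) (m-j)) := by
    intro j hj
    simp only [Finset.mem_range] at hj
    have hjm : j ≤ m := by omega
    have hjn : j ≤ n := by omega
    have h2j : 2*j ≤ n := by omega
    have h1 : n - (n - j) = j := by omega
    have h2 : n - j = m' + (m - j) := by omega
    have eδ : γ - α - β = δ := by
      rw [hγ, hα, hβ, hc', hδ]
      linear_combination (1/2 : ℂ) * hεc - hmm'c
    have eA : pochC (a/2) (n-j) = pochC (a/2) m' * ((-1:ℂ)^(m-j) * pochC (γ + j) (m-j)) := by
      rw [h2, pochC_add, pochC_reflect (a/2 + (m':ℂ)) (m-j)]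
      have hbase : (1:ℂ) - (a/2 + (m':ℂ)) - ((m - j : ℕ):ℂ) = γ + j := by
        rw [hγ]
        push_cast [Nat.cast_sub hjm]
        linear_combination - hmm'c
      rw [hbase]
    have eB : pochC (b/2) (n-j) = pochC (b/2) m' * pochC δ (m-j) := by
      rw [h2, pochC_add, ← hδ]
    have eC : pochC (c' + ((n-j : ℕ):ℂ)) j = (-1:ℂ)^j * pochC β j := by
      rw [pochC_reflect (c' + ((n-j : ℕ):ℂ)) j]
      have hbase : (1:ℂ) - (c' + ((n-j : ℕ):ℂ)) - (j:ℂ) = β := by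
        rw [hβ]
        push_cast [Nat.cast_sub hjn]
        ring
      rw [hbase]
    have eQ : (Nat.choose (n-j) j : ℂ) * pochC (((n-j : ℕ):ℂ)+1) j
        = (-1:ℂ)^j * (4:ℂ)^j * (Nat.choose m j : ℂ) * pochC α j := by
      have e1 := pochC_nat_factorial (n-j) j
      rw [show n-j+j = n from by omega] at e1
      have e2 := pochC_nat_factorial (n-2*j) (2*j)
      rw [show n-2*j+2*j = n from by omega] at e2
      have e3 : (Nat.choose (n-j) j : ℂ) * (Nat.factorial j : ℂ) * (Nat.factorial (n-2*j) : ℂ)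
          = (Nat.factorial (n-j) : ℂ) := by
        have h := Nat.choose_mul_factorial_mul_factorial (show j ≤ n - j by omega)
        rw [show n - j - j = n - 2*j from by omega] at h
        exact_mod_cast congrArg (Nat.cast : ℕ → ℂ) h
      have e5 : pochC ((((n-2*j : ℕ):ℂ)+1)/2) j = (-1:ℂ)^j * pochC ((1-(n:ℂ))/2) j := by
        rw [pochC_reflect ((((n-2*j : ℕ):ℂ)+1)/2) j]
        have hbase : (1:ℂ) - (((n-2*j : ℕ):ℂ)+1)/2 - (j:ℂ) = (1-(n:ℂ))/2 := by
          push_cast [Nat.cast_sub h2j]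
          ring
        rw [hbase]
      have e6 : pochC (((((n-2*j : ℕ):ℂ)+1)+1)/2) j = (-1:ℂ)^j * pochC (-(n:ℂ)/2) j := by
        rw [pochC_reflect (((((n-2*j : ℕ):ℂ)+1)+1)/2) j]
        have hbase : (1:ℂ) - ((((n-2*j : ℕ):ℂ)+1)+1)/2 - (j:ℂ) = -(n:ℂ)/2 := by
          push_cast [Nat.cast_sub h2j]
          ring
        rw [hbase]
      have s3 : (-1:ℂ)^j * (-1:ℂ)^j = 1 := by
        rw [← pow_add, ← two_mul, pow_mul]
        norm_num
      have e9 : (4:ℂ)^j * (pochC (-(n:ℂ)/2) j * pochC ((1-(n:ℂ))/2) j)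
          = pochC (((n-2*j : ℕ):ℂ)+1) (2*j) := by
        rw [pochC_dup (((n-2*j : ℕ):ℂ)+1) j, e5, e6]
        linear_combination (-(4:ℂ)^j * pochC (-(n:ℂ)/2) j * pochC ((1-(n:ℂ))/2) j) * s3
      have e7 : pochC (-(n:ℂ)/2) j * pochC ((1-(n:ℂ))/2) j = pochC (-(m:ℂ)) j * pochC α j := by
        rcases hε01 with h | h
        · have hb1 : -(n:ℂ)/2 = -(m:ℂ) := by
            rw [h] at hεc; push_cast at hεc; linear_combination (1/2:ℂ) * hεc
          have hb2 : (1-(n:ℂ))/2 = α := by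
            rw [hα, h]; push_cast; ring
          rw [hb1, hb2]
        · have hb1 : (1-(n:ℂ))/2 = -(m:ℂ) := by
            rw [h] at hεc; push_cast at hεc; linear_combination (1/2:ℂ) * hεc
          have hb2 : -(n:ℂ)/2 = α := by
            rw [hα, h]; push_cast; ring
          rw [hb1, hb2]; ring
      have e8 : pochC (-(m:ℂ)) j = (-1:ℂ)^j * (Nat.choose m j : ℂ) * (Nat.factorial j : ℂ) :=
        pochC_neg_nat m j hjm
      set A : ℂ := (Nat.factorial (n-j) : ℂ) * (Nat.factorial j : ℂ) * (Nat.factorial (n-2*j) : ℂ) with hA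
      have hAnz : A ≠ 0 := by
        rw [hA]
        exact mul_ne_zero (mul_ne_zero (Nat.cast_ne_zero.2 (Nat.factorial_ne_zero _))
          (Nat.cast_ne_zero.2 (Nat.factorial_ne_zero _))) (Nat.cast_ne_zero.2 (Nat.factorial_ne_zero _))
      apply mul_left_cancel₀ hAnz
      have P1 : A * ((Nat.choose (n-j) j : ℂ) * pochC (((n-j : ℕ):ℂ)+1) j)
          = (Nat.factorial (n-j) : ℂ) * (Nat.factorial n : ℂ) := by
        calc A * ((Nat.choose (n-j) j : ℂ) * pochC (((n-j : ℕ):ℂ)+1) j)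
            = ((Nat.choose (n-j) j : ℂ) * (Nat.factorial j : ℂ) * (Nat.factorial (n-2*j) : ℂ)) *
              ((Nat.factorial (n-j) : ℂ) * pochC (((n-j : ℕ):ℂ)+1) j) := by rw [hA]; ring
          _ = (Nat.factorial (n-j) : ℂ) * (Nat.factorial n : ℂ) := by rw [e3, e1]
      have P2 : A * ((-1:ℂ)^j * (4:ℂ)^j * (Nat.choose m j : ℂ) * pochC α j)
          = (Nat.factorial (n-j) : ℂ) * (Nat.factorial n : ℂ) := by
        calc A * ((-1:ℂ)^j * (4:ℂ)^j * (Nat.choose m j : ℂ) * pochC α j)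
            = (Nat.factorial (n-j) : ℂ) * (Nat.factorial (n-2*j) : ℂ) *
              ((4:ℂ)^j * (((-1:ℂ)^j * (Nat.choose m j : ℂ) * (Nat.factorial j : ℂ)) * pochC α j)) := by
              rw [hA]; ring
          _ = (Nat.factorial (n-j) : ℂ) * (Nat.factorial (n-2*j) : ℂ) *
              ((4:ℂ)^j * (pochC (-(m:ℂ)) j * pochC α j)) := by rw [← e8]
          _ = (Nat.factorial (n-j) : ℂ) * (Nat.factorial (n-2*j) : ℂ) *
              ((4:ℂ)^j * (pochC (-(n:ℂ)/2) j * pochC ((1-(n:ℂ))/2) j)) := by rw [← e7]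
          _ = (Nat.factorial (n-j) : ℂ) * ((Nat.factorial (n-2*j) : ℂ) *
              pochC (((n-2*j : ℕ):ℂ)+1) (2*j)) := by rw [e9]; ring
          _ = (Nat.factorial (n-j) : ℂ) * (Nat.factorial n : ℂ) := by rw [e2]
      rw [P1, P2]
    -- assemble the term
    have s1 : (-1:ℂ)^(m-j) * (-1:ℂ)^j = (-1:ℂ)^m := by
      rw [← pow_add]; congr 1; omega
    have s2 : (4:ℂ)^(n-j) * (4:ℂ)^j = (4:ℂ)^n := by
      rw [← pow_add]; congr 1; omega
    have s3 : (-1:ℂ)^j * (-1:ℂ)^j = 1 := by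
      rw [← pow_add, ← two_mul, pow_mul]; norm_num
    simp only [hfd]
    rw [h1, eδ]
    calc pochC (a/2) (n-j) * pochC (b/2) (n-j) * (4:ℂ)^(n-j) * (-1:ℂ)^j *
          (Nat.choose (n-j) j : ℂ) * pochC (c' + ((n-j : ℕ):ℂ)) j * pochC (((n-j : ℕ):ℂ)+1) j
        = pochC (a/2) (n-j) * pochC (b/2) (n-j) * (4:ℂ)^(n-j) * (-1:ℂ)^j *
          pochC (c' + ((n-j : ℕ):ℂ)) j *
          ((Nat.choose (n-j) j : ℂ) * pochC (((n-j : ℕ):ℂ)+1) j) := by ring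
      _ = (pochC (a/2) m' * ((-1:ℂ)^(m-j) * pochC (γ + j) (m-j))) *
          (pochC (b/2) m' * pochC δ (m-j)) * (4:ℂ)^(n-j) * (-1:ℂ)^j *
          ((-1:ℂ)^j * pochC β j) *
          ((-1:ℂ)^j * (4:ℂ)^j * (Nat.choose m j : ℂ) * pochC α j) := by
          rw [eA, eB, eC, eQ]
      _ = (pochC (a/2) m' * pochC (b/2) m' * ((4:ℂ)^(n-j) * (4:ℂ)^j) *
          (((-1:ℂ)^(m-j) * (-1:ℂ)^j)) * ((-1:ℂ)^j * (-1:ℂ)^j)) *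
          ((Nat.choose m j : ℂ) * pochC α j * pochC β j * pochC (γ + j) (m-j) *
            pochC δ (m-j)) := by ring
      _ = (pochC (a/2) m' * pochC (b/2) m' * (4:ℂ)^n * (-1:ℂ)^m) *
          ((Nat.choose m j : ℂ) * pochC α j * pochC β j * pochC (γ + j) (m-j) *
            pochC δ (m-j)) := by rw [s1, s2, s3]; ring
  rw [hrefl, htrunc, Finset.sum_congr rfl key, ← Finset.mul_sum, SAAL m α β γ]
  have hγα : γ - α = (1-a)/2 - (m:ℂ) := by
    rw [hγ, hα]
    linear_combination (1/2 : ℂ) * hεc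
  have hγβ : γ - β = (b+1)/2 := by rw [hγ, hβ, hc']; ring
  rw [hγα, hγβ]
  have hra : (-1:ℂ)^m * pochC ((1-a)/2 - (m:ℂ)) m = pochC ((a+1)/2) m := by
    rw [pochC_reflect ((1-a)/2 - (m:ℂ)) m]
    have hbase : (1:ℂ) - ((1-a)/2 - (m:ℂ)) - (m:ℂ) = (a+1)/2 := by ring
    rw [hbase, ← mul_assoc, ← mul_pow]
    norm_num
  have hda := pochC_dup2 a n
  have hdb := pochC_dup2 b n
  rw [← hm', ← hm] at hda hdb
  have h4n : (4:ℂ)^n = 2^n * 2^n := by rw [← mul_pow]; norm_num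
  rw [hda, hdb, h4n]
  linear_combination (pochC (a/2) m' * pochC (b/2) m' * (2:ℂ)^n * (2:ℂ)^n *
    pochC ((b+1)/2) m) * hra

/-- **Quadratic transformation, even case** (formula (6.C1) of the paper, after
Krattenthaler–Rao): for `A = −2p` an even nonpositive integer,
`₃F₂[A, B, D; (A+B+1)/2, E | 1]
  = ₄F₃[A/2, B/2, E−D, D; (A+B+1)/2, E/2, (E+1)/2 | 1]`. -/
theorem quadratic_transformation_even (p : ℕ) (B D E : ℂ)
    (h1 : pochC ((-(2*(p:ℂ)) + B + 1)/2) (2*p) ≠ 0)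
    (h2 : pochC E (2*p) ≠ 0) :
    ∑ n ∈ Finset.range (2*p+1),
      (pochC (-(2*(p:ℂ))) n * pochC B n * pochC D n) /
      (pochC ((-(2*(p:ℂ)) + B + 1)/2) n * pochC E n * (Nat.factorial n : ℂ))
    = ∑ n ∈ Finset.range (p+1),
      (pochC (-(p:ℂ)) n * pochC (B/2) n * pochC (E - D) n * pochC D n) /
      (pochC ((-(2*(p:ℂ)) + B + 1)/2) n * pochC (E/2) n * pochC ((E+1)/2) n *
        (Nat.factorial n : ℂ)) := by
  set a : ℂ := -(2*(p:ℂ)) with hadef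
  set c' : ℂ := (a + B + 1)/2 with hc'd
  have ha2 : a/2 = -(p:ℂ) := by rw [hadef]; ring
  have hc'k : ∀ {k : ℕ}, k ≤ 2*p → pochC c' k ≠ 0 := fun hk => pochC_ne_zero_of_le h1 hk
  have hEk : ∀ {k : ℕ}, k ≤ 2*p → pochC E k ≠ 0 := fun hk => pochC_ne_zero_of_le h2 hk
  set T : ℕ → ℕ → ℂ := fun n k =>
    (pochC (a/2) k * pochC (B/2) k * (4:ℂ)^k * (-1:ℂ)^(n-k) * (Nat.choose k (n-k) : ℂ) *
      pochC D n) / (pochC c' k * (Nat.factorial k : ℂ) * pochC E n) with hT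
  set R : ℕ → ℂ := fun k =>
    (pochC (-(p:ℂ)) k * pochC (B/2) k * pochC (E - D) k * pochC D k) /
      (pochC c' k * pochC (E/2) k * pochC ((E+1)/2) k * (Nat.factorial k : ℂ)) with hR
  have stepA : ∀ n ∈ Finset.range (2*p+1),
      (pochC a n * pochC B n * pochC D n) / (pochC c' n * pochC E n * (Nat.factorial n : ℂ))
      = ∑ k ∈ Finset.range (n+1), T n k := by
    intro n hn
    simp only [Finset.mem_range] at hn
    have hn2p : n ≤ 2*p := by omega
    have hc'n : pochC c' n ≠ 0 := hc'k hn2p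
    have hEn : pochC E n ≠ 0 := hEk hn2p
    have hnfac : (Nat.factorial n : ℂ) ≠ 0 := Nat.cast_ne_zero.2 (Nat.factorial_ne_zero _)
    have perk : ∀ k ∈ Finset.range (n+1),
        (pochC (a/2) k * pochC (B/2) k * (4:ℂ)^k * (-1:ℂ)^(n-k) * (Nat.choose k (n-k) : ℂ) *
          pochC ((a+B+1)/2 + (k:ℂ)) (n-k) * pochC ((k:ℂ)+1) (n-k)) *
          (pochC D n / (pochC c' n * pochC E n * (Nat.factorial n : ℂ))) = T n k := by
      intro k hk
      simp only [Finset.mem_range] at hk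
      have hkn : k ≤ n := by omega
      have q1 : pochC c' k * pochC (c' + (k:ℂ)) (n-k) = pochC c' n := by
        rw [← pochC_add]
        congr 1
        omega
      have q2 : (Nat.factorial k : ℂ) * pochC ((k:ℂ)+1) (n-k) = (Nat.factorial n : ℂ) := by
        have h := pochC_nat_factorial k (n-k)
        rwa [show k + (n-k) = n from by omega] at h
      have hc'kk : pochC c' k ≠ 0 := hc'k (le_trans hkn hn2p)
      have hkfac : (Nat.factorial k : ℂ) ≠ 0 := Nat.cast_ne_zero.2 (Nat.factorial_ne_zero _)
      have hx1 : pochC (c' + (k:ℂ)) (n-k) ≠ 0 := by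
        intro h0
        rw [h0, mul_zero] at q1
        exact hc'n q1.symm
      have hx2 : pochC ((k:ℂ)+1) (n-k) ≠ 0 := by
        intro h0
        rw [h0, mul_zero] at q2
        exact hnfac q2.symm
      simp only [hT, ← hc'd]
      field_simp
      linear_combination (pochC (a/2) k * pochC (B/2) k *
          (Nat.choose k (n-k) : ℂ) * pochC D n * pochC ((k:ℂ)+1) (n-k) *
          (Nat.factorial k : ℂ)) * q1 +
        (pochC (a/2) k * pochC (B/2) k *
          (Nat.choose k (n-k) : ℂ) * pochC D n * pochC c' n) * q2
    calc (pochC a n * pochC B n * pochC D n) / (pochC c' n * pochC E n * (Nat.factorial n : ℂ))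
        = (pochC a n * pochC B n) *
          (pochC D n / (pochC c' n * pochC E n * (Nat.factorial n : ℂ))) := by ring
      _ = (∑ k ∈ Finset.range (n+1), pochC (a/2) k * pochC (B/2) k * (4:ℂ)^k * (-1:ℂ)^(n-k) *
            (Nat.choose k (n-k) : ℂ) * pochC ((a+B+1)/2 + (k:ℂ)) (n-k) * pochC ((k:ℂ)+1) (n-k)) *
          (pochC D n / (pochC c' n * pochC E n * (Nat.factorial n : ℂ))) := by
          rw [star n a B]
      _ = ∑ k ∈ Finset.range (n+1), (pochC (a/2) k * pochC (B/2) k * (4:ℂ)^k * (-1:ℂ)^(n-k) *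
            (Nat.choose k (n-k) : ℂ) * pochC ((a+B+1)/2 + (k:ℂ)) (n-k) * pochC ((k:ℂ)+1) (n-k)) *
          (pochC D n / (pochC c' n * pochC E n * (Nat.factorial n : ℂ))) := Finset.sum_mul _ _ _
      _ = ∑ k ∈ Finset.range (n+1), T n k := Finset.sum_congr rfl perk
  have stepC : ∀ k ∈ Finset.range (2*p+1), ∑ n ∈ Finset.Ico k (2*p+1), T n k = R k := by
    intro k hk
    simp only [Finset.mem_range] at hk
    have hk2p : k ≤ 2*p := by omega
    by_cases hkp : k ≤ p
    · have hkfac : (Nat.factorial k : ℂ) ≠ 0 := Nat.cast_ne_zero.2 (Nat.factorial_ne_zero _)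
      have hc'kk : pochC c' k ≠ 0 := hc'k hk2p
      have hE2k : pochC E (2*k) ≠ 0 := hEk (by omega)
      rw [Finset.sum_Ico_eq_sum_range]
      have htr : ∑ i ∈ Finset.range (2*p+1-k), T (k+i) k = ∑ i ∈ Finset.range (k+1), T (k+i) k := by
        symm
        apply Finset.sum_subset (Finset.range_subset_range.2 (by omega))
        intro i hi1 hi2
        simp only [Finset.mem_range] at hi1 hi2
        have hch : Nat.choose k (k+i-k) = 0 := by
          rw [show k+i-k = i from by omega]
          exact Nat.choose_eq_zero_of_lt (by omega)
        simp only [hT, hch]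
        simp
      rw [htr]
      set W : ℂ := (pochC (a/2) k * pochC (B/2) k * (4:ℂ)^k * pochC D k) /
          (pochC c' k * (Nat.factorial k : ℂ) * pochC E (2*k)) with hW
      have peri : ∀ i ∈ Finset.range (k+1), T (k+i) k
          = W * ((-1:ℂ)^i * (Nat.choose k i : ℂ) * pochC (D + (k:ℂ)) i *
              pochC ((E + (k:ℂ)) + (i:ℂ)) (k - i)) := by
        intro i hi
        simp only [Finset.mem_range] at hi
        have hik : i ≤ k := by omega
        have hki : k + i - k = i := by omega
        have r1 : pochC D (k+i) = pochC D k * pochC (D + (k:ℂ)) i := pochC_add D k i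
        have r2 : pochC E (k+i) * pochC ((E + (k:ℂ)) + (i:ℂ)) (k-i) = pochC E (2*k) := by
          have h := pochC_add E (k+i) (k-i)
          rw [show (k+i) + (k-i) = 2*k from by omega] at h
          rw [h, show E + ((k+i:ℕ):ℂ) = (E + (k:ℂ)) + (i:ℂ) from by push_cast; ring]
        have hEki : pochC E (k+i) ≠ 0 := hEk (by omega)
        simp only [hT, hW, hki]
        rw [r1]
        field_simp
        linear_combination (-(pochC (a/2) k * pochC (B/2) k *
          (Nat.choose k i : ℂ) * pochC D k * pochC (D + (k:ℂ)) i)) * r2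
      rw [Finset.sum_congr rfl peri, ← Finset.mul_sum, CV k (D + (k:ℂ)) (E + (k:ℂ)),
        show (E + (k:ℂ)) - (D + (k:ℂ)) = E - D from by ring]
      have hdup : pochC E (2*k) = 4^k * pochC (E/2) k * pochC ((E+1)/2) k := pochC_dup E k
      have hprA : pochC (E/2) k ≠ 0 := by
        intro h0; apply hE2k; rw [hdup, h0]; ring
      have hprB : pochC ((E+1)/2) k ≠ 0 := by
        intro h0; apply hE2k; rw [hdup, h0]; ring
      simp only [hR, hW]
      rw [hdup, ha2]
      field_simp
    · have hz : pochC (a/2) k = 0 := by rw [ha2]; exact pochC_neg_nat_zero p k (by omega)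
      have hz2 : pochC (-(p:ℂ)) k = 0 := pochC_neg_nat_zero p k (by omega)
      have hzt : ∀ n ∈ Finset.Ico k (2*p+1), T n k = 0 := by
        intro n hn
        simp only [hT, hz]
        simp
      rw [Finset.sum_congr rfl hzt, Finset.sum_const_zero]
      simp only [hR, hz2]
      simp
  calc ∑ n ∈ Finset.range (2*p+1),
      (pochC a n * pochC B n * pochC D n) / (pochC c' n * pochC E n * (Nat.factorial n : ℂ))
      = ∑ n ∈ Finset.range (2*p+1), ∑ k ∈ Finset.range (n+1), T n k := Finset.sum_congr rfl stepA
    _ = ∑ k ∈ Finset.range (2*p+1), ∑ n ∈ Finset.Ico k (2*p+1), T n k := tri_swap _ _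
    _ = ∑ k ∈ Finset.range (2*p+1), R k := Finset.sum_congr rfl stepC
    _ = ∑ k ∈ Finset.range (p+1), R k := by
        symm
        apply Finset.sum_subset (Finset.range_subset_range.2 (by omega))
        intro k hk1 hk2
        simp only [Finset.mem_range] at hk1 hk2
        have : pochC (-(p:ℂ)) k = 0 := pochC_neg_nat_zero p k (by omega)
        simp only [hR, this, zero_mul, mul_zero]
        simp
end
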